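/- arXiv:1503.06903 — 6 statements merged into one kernel-verified Lean document; each statement's English description precedes it below -/
import Mathlib

section
/- The Read–Bajraktarević operator T : C_{y0,yN}(I) → C_{y0,yN}(I) defined by (Tg)(x) = F_i(L_i^{-1}(x), g(L_i^{-1}(x))) for x ∈ [x_{i-1}, x_i], i = 1,…,N, is well-defined and is a contraction with contraction factor s = max{s_i : i = 1,…,N} < 1; its unique fixed point f is a continuous function on I satisfying f(x_j) = y_j for j = 0,1,…,N and the functional equation f(L_i(x)) = F_i(x, f(x)) for all x ∈ I and i = 1,…,N. -/
open Set

private lemma glueCO {α β : Type*} [TopologicalSpace α] [TopologicalSpace β] {f : α → β}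
    {s t : Set α} (hs : IsClosed s) (ht : IsClosed t)
    (hfs : ContinuousOn f s) (hft : ContinuousOn f t) : ContinuousOn f (s ∪ t) := by
  intro p hp
  have Hs : ContinuousWithinAt f s p := by
    by_cases h : p ∈ s
    · exact hfs p h
    · exact continuousWithinAt_of_notMem_closure (by rwa [hs.closure_eq])
  have Ht : ContinuousWithinAt f t p := by
    by_cases h : p ∈ t
    · exact hft p h
    · exact continuousWithinAt_of_notMem_closure (by rwa [ht.closure_eq])
  exact Hs.union Ht

/-- The Read–Bajraktarević operator on `C_{y0,yN}(I)` is well-defined, is a contraction with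
factor `max s_i < 1`, and its unique fixed point is the continuous fractal interpolation
function. -/
theorem stmt0
    (N : ℕ) (hN : 2 ≤ N)
    (x y : ℕ → ℝ)
    (hx : ∀ i, i < N → x i < x (i + 1))
    (L Li : ℕ → ℝ → ℝ) (l : ℕ → ℝ)
    (hl : ∀ i, i < N → l i ∈ Ioo (0 : ℝ) 1)
    (hLmaps : ∀ i, i < N → MapsTo (L i) (Icc (x 0) (x N)) (Icc (x i) (x (i + 1))))
    (hL0 : ∀ i, i < N → L i (x 0) = x i)
    (hLN : ∀ i, i < N → L i (x N) = x (i + 1))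
    (hLlip : ∀ i, i < N → ∀ u ∈ Icc (x 0) (x N), ∀ v ∈ Icc (x 0) (x N),
      |L i u - L i v| ≤ l i * |u - v|)
    (hLiL : ∀ i, i < N → ∀ t ∈ Icc (x 0) (x N), Li i (L i t) = t)
    (hLLi : ∀ i, i < N → ∀ t ∈ Icc (x i) (x (i + 1)),
      L i (Li i t) = t ∧ Li i t ∈ Icc (x 0) (x N))
    (hLicont : ∀ i, i < N → ContinuousOn (Li i) (Icc (x i) (x (i + 1))))
    (F : ℕ → ℝ → ℝ → ℝ) (s : ℕ → ℝ)
    (hs : ∀ i, i < N → s i ∈ Ioo (0 : ℝ) 1)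
    (hFcont : ∀ i, i < N →
      ContinuousOn (fun p : ℝ × ℝ => F i p.1 p.2) ((Icc (x 0) (x N)) ×ˢ (univ : Set ℝ)))
    (hF0 : ∀ i, i < N → F i (x 0) (y 0) = y i)
    (hFN : ∀ i, i < N → F i (x N) (y N) = y (i + 1))
    (hFlip : ∀ i, i < N → ∀ t ∈ Icc (x 0) (x N), ∀ u v : ℝ,
      |F i t u - F i t v| ≤ s i * |u - v|)
    (T : (ℝ → ℝ) → ℝ → ℝ)
    (hT : ∀ g : ℝ → ℝ, g (x 0) = y 0 → g (x N) = y N → ∀ i, i < N →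
      ∀ t ∈ Icc (x i) (x (i + 1)), T g t = F i (Li i t) (g (Li i t))) :
    (∀ g : ℝ → ℝ, ContinuousOn g (Icc (x 0) (x N)) → g (x 0) = y 0 → g (x N) = y N →
      ContinuousOn (T g) (Icc (x 0) (x N)) ∧ T g (x 0) = y 0 ∧ T g (x N) = y N) ∧
    (Finset.range N).sup' (Finset.nonempty_range_iff.mpr (by omega)) s < 1 ∧
    (∀ g h : ℝ → ℝ,
      ContinuousOn g (Icc (x 0) (x N)) → g (x 0) = y 0 → g (x N) = y N →
      ContinuousOn h (Icc (x 0) (x N)) → h (x 0) = y 0 → h (x N) = y N →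
      (⨆ t : Icc (x 0) (x N), |T g (t : ℝ) - T h (t : ℝ)|) ≤
        (Finset.range N).sup' (Finset.nonempty_range_iff.mpr (by omega)) s *
          ⨆ t : Icc (x 0) (x N), |g (t : ℝ) - h (t : ℝ)|) ∧
    (∃ f : ℝ → ℝ, ContinuousOn f (Icc (x 0) (x N)) ∧ f (x 0) = y 0 ∧ f (x N) = y N ∧
      (∀ t ∈ Icc (x 0) (x N), T f t = f t) ∧
      (∀ j, j ≤ N → f (x j) = y j) ∧
      (∀ i, i < N → ∀ t ∈ Icc (x 0) (x N), f (L i t) = F i t (f t)) ∧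
      (∀ g : ℝ → ℝ, ContinuousOn g (Icc (x 0) (x N)) → g (x 0) = y 0 → g (x N) = y N →
        (∀ t ∈ Icc (x 0) (x N), T g t = g t) →
        ∀ t ∈ Icc (x 0) (x N), g t = f t)) := by
  classical
  -- monotonicity of the knots
  have xmono : ∀ j, j ≤ N → ∀ i, i ≤ j → x i ≤ x j := by
    intro j
    induction j with
    | zero => intro _ i hi; interval_cases i; exact le_rfl
    | succ k ih =>
      intro hk i hi
      rcases Nat.lt_or_ge i (k + 1) with h | h
      · exact le_trans (ih (by omega) i (by omega)) (hx k (by omega)).le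
      · have : i = k + 1 := by omega
        simp [this]
  have h0N : x 0 ≤ x N := xmono N le_rfl 0 (by omega)
  have h0Nlt : x 0 < x N := lt_of_lt_of_le (hx 0 (by omega)) (xmono N le_rfl 1 (by omega))
  have hxmem : ∀ i, i ≤ N → x i ∈ Icc (x 0) (x N) :=
    fun i hi => ⟨xmono i hi 0 (Nat.zero_le _), xmono N le_rfl i hi⟩
  have cover : ∀ t ∈ Icc (x 0) (x N), ∃ i, i < N ∧ x i ≤ t ∧ t ≤ x (i + 1) := by
    intro t ht
    set P : ℕ → Prop := fun k => x k ≤ t with hP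
    have h0 : P 0 := ht.1
    have hile : Nat.findGreatest P (N - 1) ≤ N - 1 := Nat.findGreatest_le _
    have hPi : P (Nat.findGreatest P (N - 1)) := Nat.findGreatest_spec (Nat.zero_le _) h0
    refine ⟨Nat.findGreatest P (N - 1), by omega, hPi, ?_⟩
    rcases Nat.lt_or_ge (Nat.findGreatest P (N - 1)) (N - 1) with h | h
    · have hnp : ¬ P (Nat.findGreatest P (N - 1) + 1) :=
        Nat.findGreatest_is_greatest (n := N - 1) (Nat.lt_succ_self _) (by omega)
      exact (lt_of_not_ge hnp).le
    · have he : Nat.findGreatest P (N - 1) + 1 = N := by omega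
      rw [he]; exact ht.2
  have hLi0 : ∀ i, i < N → Li i (x i) = x 0 := by
    intro i hi
    have := hLiL i hi (x 0) (hxmem 0 (by omega))
    rwa [hL0 i hi] at this
  have hLiN : ∀ i, i < N → Li i (x (i + 1)) = x N := by
    intro i hi
    have := hLiL i hi (x N) (hxmem N le_rfl)
    rwa [hLN i hi] at this
  -- well-definedness
  have key1 : ∀ g : ℝ → ℝ, ContinuousOn g (Icc (x 0) (x N)) → g (x 0) = y 0 → g (x N) = y N →
      ContinuousOn (T g) (Icc (x 0) (x N)) ∧ T g (x 0) = y 0 ∧ T g (x N) = y N := by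
    intro g hg hg0 hgN
    have piece : ∀ i, i < N → ContinuousOn (T g) (Icc (x i) (x (i + 1))) := by
      intro i hi
      have hmaps : MapsTo (Li i) (Icc (x i) (x (i + 1))) (Icc (x 0) (x N)) :=
        fun t ht => (hLLi i hi t ht).2
      have hc : ContinuousOn (fun t => F i (Li i t) (g (Li i t))) (Icc (x i) (x (i + 1))) := by
        apply (hFcont i hi).comp ((hLicont i hi).prodMk ((hg.comp (hLicont i hi) hmaps)))
        intro t ht
        exact ⟨hmaps ht, trivial⟩
      exact hc.congr fun t ht => hT g hg0 hgN i hi t ht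
    have glue : ∀ k, k < N → ContinuousOn (T g) (Icc (x 0) (x (k + 1))) := by
      intro k
      induction k with
      | zero => intro h; exact piece 0 h
      | succ m ih =>
        intro h
        have hu : Icc (x 0) (x (m + 1)) ∪ Icc (x (m + 1)) (x (m + 2)) = Icc (x 0) (x (m + 2)) :=
          Icc_union_Icc_eq_Icc (xmono (m + 1) (by omega) 0 (by omega)) (hx (m + 1) (by omega)).le
        rw [← hu]
        exact glueCO isClosed_Icc isClosed_Icc (ih (by omega)) (piece (m + 1) h)
    have hcont : ContinuousOn (T g) (Icc (x 0) (x N)) := by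
      have h1 := glue (N - 1) (by omega)
      have h2 : N - 1 + 1 = N := by omega
      rwa [h2] at h1
    have h0 : T g (x 0) = y 0 := by
      have hm : x 0 ∈ Icc (x 0) (x 1) := ⟨le_rfl, (hx 0 (by omega)).le⟩
      rw [hT g hg0 hgN 0 (by omega) (x 0) hm, hLi0 0 (by omega), hg0, hF0 0 (by omega)]
    have hN' : T g (x N) = y N := by
      have hlt : N - 1 < N := by omega
      have he : N - 1 + 1 = N := by omega
      have hm : x N ∈ Icc (x (N - 1)) (x (N - 1 + 1)) := by
        rw [he]; exact ⟨xmono N le_rfl (N - 1) (by omega), le_rfl⟩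
      rw [hT g hg0 hgN (N - 1) hlt (x N) hm]
      have hLiNN : Li (N - 1) (x N) = x N := by
        have := hLiN (N - 1) hlt
        rwa [he] at this
      rw [hLiNN, hgN]
      have := hFN (N - 1) hlt
      rwa [he] at this
    exact ⟨hcont, h0, hN'⟩
  -- the contraction factor
  set S : ℝ := (Finset.range N).sup' (Finset.nonempty_range_iff.mpr (by omega)) s with hSdef
  have hsleS : ∀ i, i < N → s i ≤ S := fun i hi => Finset.le_sup' s (Finset.mem_range.mpr hi)
  have hSlt1 : S < 1 :=
    (Finset.sup'_lt_iff (Finset.nonempty_range_iff.mpr (by omega))).mpr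
      fun i hi => (hs i (Finset.mem_range.mp hi)).2
  have hS0 : 0 < S := lt_of_lt_of_le (hs 0 (by omega)).1 (hsleS 0 (by omega))
  haveI hne : Nonempty (Icc (x 0) (x N)) := (nonempty_Icc.mpr h0N).to_subtype
  have bdd : ∀ g h : ℝ → ℝ, ContinuousOn g (Icc (x 0) (x N)) →
      ContinuousOn h (Icc (x 0) (x N)) →
      BddAbove (range fun t : Icc (x 0) (x N) => |g (t : ℝ) - h (t : ℝ)|) := by
    intro g h hg hh
    have him := image_eq_range (fun t => |g t - h t|) (Icc (x 0) (x N))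
    rw [← him]
    exact (isCompact_Icc.image_of_continuousOn ((hg.sub hh).abs)).bddAbove
  -- the contraction estimate
  have key3 : ∀ g h : ℝ → ℝ,
      ContinuousOn g (Icc (x 0) (x N)) → g (x 0) = y 0 → g (x N) = y N →
      ContinuousOn h (Icc (x 0) (x N)) → h (x 0) = y 0 → h (x N) = y N →
      (⨆ t : Icc (x 0) (x N), |T g (t : ℝ) - T h (t : ℝ)|) ≤
        S * ⨆ t : Icc (x 0) (x N), |g (t : ℝ) - h (t : ℝ)| := by
    intro g h hg hg0 hgN hh hh0 hhN
    have hB := bdd g h hg hh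
    apply ciSup_le
    intro t
    obtain ⟨i, hi, h1, h2⟩ := cover (t : ℝ) t.2
    have htm : (t : ℝ) ∈ Icc (x i) (x (i + 1)) := ⟨h1, h2⟩
    have hu : Li i (t : ℝ) ∈ Icc (x 0) (x N) := (hLLi i hi (t : ℝ) htm).2
    rw [hT g hg0 hgN i hi (t : ℝ) htm, hT h hh0 hhN i hi (t : ℝ) htm]
    calc |F i (Li i ↑t) (g (Li i ↑t)) - F i (Li i ↑t) (h (Li i ↑t))|
        ≤ s i * |g (Li i ↑t) - h (Li i ↑t)| := hFlip i hi _ hu _ _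
      _ ≤ S * |g (Li i ↑t) - h (Li i ↑t)| :=
          mul_le_mul_of_nonneg_right (hsleS i hi) (abs_nonneg _)
      _ ≤ S * ⨆ t : Icc (x 0) (x N), |g (t : ℝ) - h (t : ℝ)| := by
          apply mul_le_mul_of_nonneg_left _ hS0.le
          exact le_ciSup hB (⟨Li i ↑t, hu⟩ : Icc (x 0) (x N))
  -- the fixed point via Banach
  haveI : CompactSpace (Icc (x 0) (x N)) := isCompact_iff_compactSpace.mp isCompact_Icc
  set e0 : Icc (x 0) (x N) := ⟨x 0, left_mem_Icc.2 h0N⟩ with he0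
  set eN : Icc (x 0) (x N) := ⟨x N, right_mem_Icc.2 h0N⟩ with heN
  set X : Set C(Icc (x 0) (x N), ℝ) := {p | p e0 = y 0 ∧ p eN = y N} with hX
  have hXclosed : IsClosed X :=
    ((isClosed_eq ((continuous_eval_const e0)) continuous_const).inter
      (isClosed_eq ((continuous_eval_const eN)) continuous_const))
  haveI : CompleteSpace X := hXclosed.completeSpace_coe
  set E : X → ℝ → ℝ := fun g => IccExtend h0N ⇑g.1 with hE
  have hE0 : ∀ g : X, E g (x 0) = y 0 := by
    intro g
    show IccExtend h0N ⇑g.1 (x 0) = y 0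
    rw [IccExtend_left]
    exact g.2.1
  have hEN' : ∀ g : X, E g (x N) = y N := by
    intro g
    show IccExtend h0N ⇑g.1 (x N) = y N
    rw [IccExtend_right]
    exact g.2.2
  have hEc : ∀ g : X, ContinuousOn (E g) (Icc (x 0) (x N)) :=
    fun g => (g.1.continuous.comp continuous_projIcc).continuousOn
  have hEval : ∀ (g : X) (t : ℝ) (ht : t ∈ Icc (x 0) (x N)), E g t = g.1 ⟨t, ht⟩ :=
    fun g t ht => IccExtend_of_mem h0N _ ht
  set Φ : X → X := fun g =>
    ⟨⟨(Icc (x 0) (x N)).restrict (T (E g)),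
        ((key1 (E g) (hEc g) (hE0 g) (hEN' g)).1).restrict⟩,
      (key1 (E g) (hEc g) (hE0 g) (hEN' g)).2.1,
      (key1 (E g) (hEc g) (hE0 g) (hEN' g)).2.2⟩ with hΦ
  set K : NNReal := ⟨S, hS0.le⟩ with hK
  have hΦlip : LipschitzWith K Φ := by
    apply LipschitzWith.of_dist_le_mul
    intro g h
    rw [Subtype.dist_eq, Subtype.dist_eq]
    have hnn : (0 : ℝ) ≤ (K : ℝ) * dist (g : C(Icc (x 0) (x N), ℝ)) (h : C(Icc (x 0) (x N), ℝ)) :=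
      mul_nonneg K.2 dist_nonneg
    rw [ContinuousMap.dist_le hnn]
    intro a
    obtain ⟨i, hi, h1, h2⟩ := cover (a : ℝ) a.2
    have htm : (a : ℝ) ∈ Icc (x i) (x (i + 1)) := ⟨h1, h2⟩
    have hu : Li i (a : ℝ) ∈ Icc (x 0) (x N) := (hLLi i hi (a : ℝ) htm).2
    show dist (T (E g) (a : ℝ)) (T (E h) (a : ℝ)) ≤ _
    rw [hT (E g) (hE0 g) (hEN' g) i hi (a : ℝ) htm,
      hT (E h) (hE0 h) (hEN' h) i hi (a : ℝ) htm, Real.dist_eq]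
    calc |F i (Li i ↑a) (E g (Li i ↑a)) - F i (Li i ↑a) (E h (Li i ↑a))|
        ≤ s i * |E g (Li i ↑a) - E h (Li i ↑a)| := hFlip i hi _ hu _ _
      _ ≤ S * |E g (Li i ↑a) - E h (Li i ↑a)| :=
          mul_le_mul_of_nonneg_right (hsleS i hi) (abs_nonneg _)
      _ ≤ (K : ℝ) * dist (g : C(Icc (x 0) (x N), ℝ)) (h : C(Icc (x 0) (x N), ℝ)) := by
          rw [hEval g _ hu, hEval h _ hu]
          apply mul_le_mul_of_nonneg_left _ hS0.le
          rw [← Real.dist_eq]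
          exact ContinuousMap.dist_apply_le_dist _
  have hcontr : ContractingWith K Φ := by
    constructor
    · rw [← NNReal.coe_lt_one]
      exact hSlt1
    · exact hΦlip
  -- X is nonempty: linear interpolation
  have hg₀c : Continuous fun t : Icc (x 0) (x N) =>
      y 0 + ((t : ℝ) - x 0) * ((y N - y 0) / (x N - x 0)) :=
    continuous_const.add ((continuous_subtype_val.sub continuous_const).mul continuous_const)
  haveI : Nonempty X := by
    refine ⟨⟨⟨_, hg₀c⟩, ?_, ?_⟩⟩
    · show y 0 + ((x 0 : ℝ) - x 0) * ((y N - y 0) / (x N - x 0)) = y 0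
      ring
    · show y 0 + ((x N : ℝ) - x 0) * ((y N - y 0) / (x N - x 0)) = y N
      field_simp [sub_ne_zero.mpr h0Nlt.ne']
      ring
  set fhat : X := ContractingWith.fixedPoint Φ hcontr with hfhat
  have hfp : Φ fhat = fhat := hcontr.fixedPoint_isFixedPt
  refine ⟨key1, hSlt1, key3, E fhat, hEc fhat, hE0 fhat, hEN' fhat, ?_, ?_, ?_, ?_⟩
  · -- fixed point equation
    intro t ht
    calc T (E fhat) t = (Φ fhat).1 ⟨t, ht⟩ := rfl
      _ = fhat.1 ⟨t, ht⟩ := by rw [hfp]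
      _ = E fhat t := (hEval fhat t ht).symm
  · -- interpolation
    intro j hj
    rcases eq_or_lt_of_le hj with h | h
    · rw [h]; exact hEN' fhat
    · have hm : x j ∈ Icc (x j) (x (j + 1)) := ⟨le_rfl, (hx j h).le⟩
      have hfx : T (E fhat) (x j) = E fhat (x j) := by
        calc T (E fhat) (x j) = (Φ fhat).1 ⟨x j, hxmem j hj⟩ := rfl
          _ = fhat.1 ⟨x j, hxmem j hj⟩ := by rw [hfp]
          _ = E fhat (x j) := (hEval fhat (x j) (hxmem j hj)).symm
      rw [← hfx, hT (E fhat) (hE0 fhat) (hEN' fhat) j h (x j) hm, hLi0 j h, hE0 fhat,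
        hF0 j h]
  · -- functional equation
    intro i hi t ht
    have hLt : L i t ∈ Icc (x i) (x (i + 1)) := hLmaps i hi ht
    have hLtJ : L i t ∈ Icc (x 0) (x N) :=
      ⟨le_trans (xmono i (by omega) 0 (by omega)) hLt.1,
        le_trans hLt.2 (xmono N le_rfl (i + 1) (by omega))⟩
    have hfx : T (E fhat) (L i t) = E fhat (L i t) := by
      calc T (E fhat) (L i t) = (Φ fhat).1 ⟨L i t, hLtJ⟩ := rfl
        _ = fhat.1 ⟨L i t, hLtJ⟩ := by rw [hfp]
        _ = E fhat (L i t) := (hEval fhat (L i t) hLtJ).symm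
    rw [← hfx, hT (E fhat) (hE0 fhat) (hEN' fhat) i hi (L i t) hLt, hLiL i hi t ht]
  · -- uniqueness
    intro g hg hg0 hgN hgfix t ht
    set ghat : X := ⟨⟨(Icc (x 0) (x N)).restrict g, hg.restrict⟩, hg0, hgN⟩ with hghat
    have hEghat : ∀ u (hu : u ∈ Icc (x 0) (x N)), E ghat u = g u := by
      intro u hu
      rw [hEval ghat u hu]
      rfl
    have hfpghat : Φ ghat = ghat := by
      apply Subtype.ext
      apply ContinuousMap.ext
      intro a
      show T (E ghat) (a : ℝ) = g (a : ℝ)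
      obtain ⟨i, hi, h1, h2⟩ := cover (a : ℝ) a.2
      have htm : (a : ℝ) ∈ Icc (x i) (x (i + 1)) := ⟨h1, h2⟩
      have hu : Li i (a : ℝ) ∈ Icc (x 0) (x N) := (hLLi i hi (a : ℝ) htm).2
      rw [hT (E ghat) (hE0 ghat) (hEN' ghat) i hi (a : ℝ) htm, hEghat _ hu]
      have hga := hgfix (a : ℝ) a.2
      rw [hT g hg0 hgN i hi (a : ℝ) htm] at hga
      exact hga
    have : ghat = fhat := hcontr.fixedPoint_unique hfpghat
    calc g t = ghat.1 ⟨t, ht⟩ := rfl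
      _ = fhat.1 ⟨t, ht⟩ := by rw [this]
      _ = E fhat t := (hEval fhat t ht).symm
end

section
/- Let f be the unique continuous function on I with f(x_j) = y_j for j = 0,…,N satisfying f(L_i(x)) = F_i(x, f(x)) for all x ∈ I and i = 1,…,N. Then the graph G = {(x, f(x)) : x ∈ I} is a nonempty compact subset of I × ℝ satisfying the self-referential set equation G = ⋃_{i=1}^N W_i(G), where W_i(x, y) = (L_i(x), F_i(x, y)). -/
open Set

/-- The graph of the fractal interpolation function is a nonempty compact subset of `I × ℝ`
satisfying the self-referential set equation `G = ⋃ i, W i '' G`. -/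
theorem stmt1
    (N : ℕ) (hN : 2 ≤ N)
    (x y : ℕ → ℝ)
    (hx : ∀ i, i < N → x i < x (i + 1))
    (L : ℕ → ℝ → ℝ) (l : ℕ → ℝ)
    (hl : ∀ i, i < N → l i ∈ Ioo (0 : ℝ) 1)
    (hLmaps : ∀ i, i < N → MapsTo (L i) (Icc (x 0) (x N)) (Icc (x i) (x (i + 1))))
    (hLinj : ∀ i, i < N → InjOn (L i) (Icc (x 0) (x N)))
    (hL0 : ∀ i, i < N → L i (x 0) = x i)
    (hLN : ∀ i, i < N → L i (x N) = x (i + 1))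
    (hLlip : ∀ i, i < N → ∀ u ∈ Icc (x 0) (x N), ∀ v ∈ Icc (x 0) (x N),
      |L i u - L i v| ≤ l i * |u - v|)
    (F : ℕ → ℝ → ℝ → ℝ) (s : ℕ → ℝ)
    (hs : ∀ i, i < N → s i ∈ Ioo (0 : ℝ) 1)
    (hFcont : ∀ i, i < N →
      ContinuousOn (fun p : ℝ × ℝ => F i p.1 p.2) ((Icc (x 0) (x N)) ×ˢ (univ : Set ℝ)))
    (hF0 : ∀ i, i < N → F i (x 0) (y 0) = y i)
    (hFN : ∀ i, i < N → F i (x N) (y N) = y (i + 1))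
    (hFlip : ∀ i, i < N → ∀ t ∈ Icc (x 0) (x N), ∀ u v : ℝ,
      |F i t u - F i t v| ≤ s i * |u - v|)
    (f : ℝ → ℝ)
    (hfc : ContinuousOn f (Icc (x 0) (x N)))
    (hfi : ∀ j, j ≤ N → f (x j) = y j)
    (hfe : ∀ i, i < N → ∀ t ∈ Icc (x 0) (x N), f (L i t) = F i t (f t)) :
    ((fun t => (t, f t)) '' Icc (x 0) (x N)).Nonempty ∧
    IsCompact ((fun t => (t, f t)) '' Icc (x 0) (x N)) ∧
    ((fun t => (t, f t)) '' Icc (x 0) (x N)) ⊆ (Icc (x 0) (x N)) ×ˢ (univ : Set ℝ) ∧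
    ((fun t => (t, f t)) '' Icc (x 0) (x N)) =
      ⋃ i ∈ Finset.range N,
        (fun p : ℝ × ℝ => (L i p.1, F i p.1 p.2)) '' ((fun t => (t, f t)) '' Icc (x 0) (x N)) := by
  -- monotonicity of x
  have mono : ∀ k, k ≤ N → ∀ j, j ≤ k → x j ≤ x k := by
    intro k
    induction k with
    | zero => intro _ j hj; exact le_of_eq (by rw [Nat.le_zero.1 hj])
    | succ k ih =>
      intro hk j hj
      rcases Nat.eq_or_lt_of_le hj with h | h
      · rw [h]
      · exact le_trans (ih (by omega) j (by omega)) (le_of_lt (hx k (by omega)))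
  have hx0N : x 0 ≤ x N := mono N le_rfl 0 (Nat.zero_le _)
  have hne : (Icc (x 0) (x N)).Nonempty := nonempty_Icc.2 hx0N
  have hcontG : ContinuousOn (fun t => (t, f t)) (Icc (x 0) (x N)) :=
    continuousOn_id.prodMk hfc
  have hcomp : IsCompact ((fun t => (t, f t)) '' Icc (x 0) (x N)) :=
    isCompact_Icc.image_of_continuousOn hcontG
  refine ⟨hne.image _, hcomp, ?_, ?_⟩
  · rintro p ⟨t, ht, rfl⟩
    exact ⟨ht, mem_univ _⟩
  · -- self-referential equation
    apply Set.Subset.antisymm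
    · rintro p ⟨t, ht, rfl⟩
      -- find i < N with x i ≤ t ≤ x (i+1)
      classical
      set i := Nat.findGreatest (fun j => x j ≤ t) (N - 1) with hi
      have hiN : i < N := lt_of_le_of_lt (Nat.findGreatest_le _) (by omega)
      have hxi : x i ≤ t := by
        have : (fun j => x j ≤ t) i := by
          rw [hi]; exact Nat.findGreatest_spec (P := fun j => x j ≤ t) (Nat.zero_le (N - 1)) ht.1
        exact this
      have hti1 : t ≤ x (i + 1) := by
        by_cases h : i + 1 ≤ N - 1
        · by_contra hc
          exact Nat.findGreatest_is_greatest (Nat.lt_succ_self i) h (le_of_lt (not_le.1 hc))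
        · have : i = N - 1 := by omega
          have : i + 1 = N := by omega
          rw [this]; exact ht.2
      -- IVT to find preimage
      have hLc : ContinuousOn (L i) (Icc (x 0) (x N)) := by
        have : LipschitzOnWith (Real.toNNReal (l i)) (L i) (Icc (x 0) (x N)) := by
          rw [lipschitzOnWith_iff_dist_le_mul]
          intro u hu v hv
          rw [Real.dist_eq, Real.dist_eq]
          simpa [Real.coe_toNNReal _ (le_of_lt (hl i hiN).1)] using hLlip i hiN u hu v hv
        exact this.continuousOn
      have hsub : Icc (x i) (x (i + 1)) ⊆ L i '' Icc (x 0) (x N) := by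
        have := intermediate_value_Icc hx0N hLc
        rwa [hL0 i hiN, hLN i hiN] at this
      obtain ⟨u, hu, hLu⟩ := hsub ⟨hxi, hti1⟩
      refine mem_iUnion₂.2 ⟨i, Finset.mem_range.2 hiN, ⟨(u, f u), ⟨u, hu, rfl⟩, ?_⟩⟩
      simp only [Prod.mk.injEq]
      refine ⟨hLu, ?_⟩
      rw [← hfe i hiN u hu, hLu]
    · intro p hp
      rw [mem_iUnion₂] at hp
      obtain ⟨i, hi, ⟨q, ⟨u, hu, rfl⟩, rfl⟩⟩ := hp
      have hiN : i < N := Finset.mem_range.1 hi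
      have hLu : L i u ∈ Icc (x 0) (x N) := by
        have h1 := hLmaps i hiN hu
        exact ⟨le_trans (mono i (by omega) 0 (Nat.zero_le _)) h1.1,
          le_trans h1.2 (mono N le_rfl (i + 1) (by omega))⟩
      exact ⟨L i u, hLu, by simp [hfe i hiN u hu]⟩
end

section
/- Suppose that for some integer k ≥ 1, |α_i| < a_i^k and q_i ∈ C^k(I) for i = 1,…,N, and suppose q_i(x_0) = y_{i-1} − α_i y_0 and q_i(x_N) = y_i − α_i y_N for all i. Define F_{i,r}(x, y) = (α_i y + q_i^{(r)}(x))/a_i^r, y_{0,r} = q_1^{(r)}(x_0)/(a_1^r − α_1), and y_{N,r} = q_N^{(r)}(x_N)/(a_N^r − α_N) for r = 1,…,k. If F_{i-1,r}(x_N, y_{N,r}) = F_{i,r}(x_0, y_{0,r}) for all i = 2,…,N and r = 1,…,k, then the unique continuous function f satisfying f(L_i(x)) = α_i f(x) + q_i(x) belongs to C^k(I), and for each r = 1,…,k its r-th derivative satisfies f^{(r)}(L_i(x)) = F_{i,r}(x, f^{(r)}(x)) for all x ∈ I and i = 1,…,N. -/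
open Set

/-- `a i = (x (i+1) - x i) / (x N - x 0)` -/
noncomputable def aC (x : ℕ → ℝ) (N i : ℕ) : ℝ := (x (i + 1) - x i) / (x N - x 0)

/-- `b i = (x N * x i - x 0 * x (i+1)) / (x N - x 0)` -/
noncomputable def bC (x : ℕ → ℝ) (N i : ℕ) : ℝ := (x N * x i - x 0 * x (i + 1)) / (x N - x 0)

/-- The affine map `L i t = a i * t + b i`. -/
noncomputable def Lm (x : ℕ → ℝ) (N i : ℕ) (t : ℝ) : ℝ := aC x N i * t + bC x N i

section Basics

variable {N : ℕ} {x : ℕ → ℝ}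

lemma chain_lt (hx : ∀ i, i < N → x i < x (i + 1)) :
    ∀ i j, i < j → j ≤ N → x i < x j := by
  intro i j hij hjN
  induction j with
  | zero => omega
  | succ j ih =>
    rcases Nat.lt_succ_iff_lt_or_eq.mp hij with h | h
    · exact lt_trans (ih h (by omega)) (hx j (by omega))
    · subst h; exact hx i (by omega)

lemma chain_le (hx : ∀ i, i < N → x i < x (i + 1)) :
    ∀ i j, i ≤ j → j ≤ N → x i ≤ x j := by
  intro i j hij hjN
  rcases eq_or_lt_of_le hij with h | h
  · subst h; exact le_rfl
  · exact (chain_lt hx i j h hjN).le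

lemma hx0N (hN : 1 ≤ N) (hx : ∀ i, i < N → x i < x (i + 1)) : x 0 < x N :=
  chain_lt hx 0 N hN le_rfl

lemma aC_pos (hN : 1 ≤ N) (hx : ∀ i, i < N → x i < x (i + 1)) {i : ℕ} (hi : i < N) :
    0 < aC x N i :=
  div_pos (sub_pos.mpr (hx i hi)) (sub_pos.mpr (hx0N hN hx))

lemma aC_lt_one (hN : 2 ≤ N) (hx : ∀ i, i < N → x i < x (i + 1)) {i : ℕ} (hi : i < N) :
    aC x N i < 1 := by
  unfold aC
  rw [div_lt_one (sub_pos.mpr (hx0N (by omega) hx))]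
  have h1 : x (i + 1) ≤ x N := chain_le hx (i + 1) N (by omega) le_rfl
  have h2 : x 0 ≤ x i := chain_le hx 0 i (by omega) (by omega)
  rcases Nat.eq_zero_or_pos i with h | h
  · subst h
    have : x 1 < x N := chain_lt hx 1 N (by omega) le_rfl
    linarith
  · have : x 0 < x i := chain_lt hx 0 i h (by omega)
    linarith

lemma sum_aC (hN : 1 ≤ N) (hx : ∀ i, i < N → x i < x (i + 1)) :
    ∑ i ∈ Finset.range N, aC x N i = 1 := by
  unfold aC
  rw [← Finset.sum_div, Finset.sum_range_sub (f := x),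
    div_self (sub_pos.mpr (hx0N hN hx)).ne']

lemma Lm_x0 (hN : 1 ≤ N) (hx : ∀ i, i < N → x i < x (i + 1)) (i : ℕ) :
    Lm x N i (x 0) = x i := by
  have h := (sub_pos.mpr (hx0N hN hx)).ne'
  unfold Lm aC bC
  field_simp
  ring

lemma Lm_xN (hN : 1 ≤ N) (hx : ∀ i, i < N → x i < x (i + 1)) (i : ℕ) :
    Lm x N i (x N) = x (i + 1) := by
  have h := (sub_pos.mpr (hx0N hN hx)).ne'
  unfold Lm aC bC
  field_simp
  ring

lemma Lm_inv {i : ℕ} (ha : aC x N i ≠ 0) (t : ℝ) :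
    (Lm x N i t - bC x N i) / aC x N i = t := by
  unfold Lm; field_simp; ring

lemma Lm_mem (hN : 1 ≤ N) (hx : ∀ i, i < N → x i < x (i + 1)) {i : ℕ} (hi : i < N)
    {t : ℝ} (ht : t ∈ Icc (x 0) (x N)) :
    Lm x N i t ∈ Icc (x i) (x (i + 1)) := by
  have ha := aC_pos hN hx hi
  constructor
  · rw [← Lm_x0 hN hx i]; unfold Lm; nlinarith [ht.1]
  · rw [← Lm_xN hN hx i]; unfold Lm; nlinarith [ht.2]

lemma piece_subset (hN : 1 ≤ N) (hx : ∀ i, i < N → x i < x (i + 1)) {i : ℕ} (hi : i < N) :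
    Icc (x i) (x (i + 1)) ⊆ Icc (x 0) (x N) :=
  Icc_subset_Icc (chain_le hx 0 i (by omega) (by omega)) (chain_le hx (i+1) N (by omega) le_rfl)

lemma Lm_surj (hN : 1 ≤ N) (hx : ∀ i, i < N → x i < x (i + 1)) {i : ℕ} (hi : i < N)
    {z : ℝ} (hz : z ∈ Icc (x i) (x (i + 1))) :
    (z - bC x N i) / aC x N i ∈ Icc (x 0) (x N) ∧
      Lm x N i ((z - bC x N i) / aC x N i) = z := by
  have ha := aC_pos hN hx hi
  have hL : Lm x N i ((z - bC x N i) / aC x N i) = z := by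
    unfold Lm; field_simp; ring
  refine ⟨⟨?_, ?_⟩, hL⟩
  · have h0 : x i = Lm x N i (x 0) := (Lm_x0 hN hx i).symm
    rw [h0] at hz
    have h1 := hz.1
    unfold Lm at h1
    rw [le_div_iff₀ ha]
    nlinarith
  · have h0 : x (i + 1) = Lm x N i (x N) := (Lm_xN hN hx i).symm
    rw [h0] at hz
    have h1 := hz.2
    unfold Lm at h1
    rw [div_le_iff₀ ha]
    nlinarith

lemma cover (hN : 1 ≤ N) (hx : ∀ i, i < N → x i < x (i + 1)) {z : ℝ}
    (hz : z ∈ Icc (x 0) (x N)) : ∃ i, i < N ∧ z ∈ Icc (x i) (x (i + 1)) := by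
  have key : ∀ n, 1 ≤ n → n ≤ N → z ≤ x n → ∃ i, i < n ∧ z ∈ Icc (x i) (x (i + 1)) := by
    intro n
    induction n with
    | zero => omega
    | succ n ih =>
      intro _ hnN hzn
      rcases Nat.eq_zero_or_pos n with h | h
      · subst h; exact ⟨0, by omega, hz.1, hzn⟩
      · by_cases hc : z ≤ x n
        · obtain ⟨i, hi, hmem⟩ := ih h (by omega) hc
          exact ⟨i, by omega, hmem⟩
        · exact ⟨n, by omega, (not_le.mp hc).le, hzn⟩
  exact key N hN le_rfl hz.2

end Basics

lemma chainx {x : ℕ → ℝ} {n : ℕ} (hm : ∀ i, i + 1 ≤ n → x i ≤ x (i + 1)) :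
    ∀ a b, a ≤ b → b ≤ n → x a ≤ x b := by
  intro a b hab hbn
  induction b with
  | zero =>
    have ha0 : a = 0 := by omega
    subst ha0; exact le_rfl
  | succ b ihb =>
    rcases Nat.lt_succ_iff_lt_or_eq.mp (Nat.lt_succ_of_le hab) with h' | h'
    · exact le_trans (ihb (by omega) (by omega)) (hm b (by omega))
    · subst h'; exact le_rfl

noncomputable def glueP (x : ℕ → ℝ) (P : ℕ → ℝ → ℝ) : ℕ → ℝ → ℝ
  | 0 => P 0
  | (j + 1) => fun z => if z ≤ x (j + 1) then glueP x P j z else P (j + 1) z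

section Glue
variable {x : ℕ → ℝ} {P : ℕ → ℝ → ℝ}

lemma glueP_eq_of_ge :
    ∀ j, (∀ i, i + 1 ≤ j → x i ≤ x (i + 1)) →
      (∀ i, i + 1 ≤ j → P i (x (i + 1)) = P (i + 1) (x (i + 1))) →
      ∀ z, x j ≤ z → glueP x P j z = P j z := by
  intro j
  induction j with
  | zero => intro _ _ z _; rfl
  | succ j ih =>
    intro hm hmatch z hz
    show (if z ≤ x (j + 1) then glueP x P j z else P (j + 1) z) = P (j + 1) z
    by_cases hc : z ≤ x (j + 1)
    · have hzz : z = x (j + 1) := le_antisymm hc hz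
      rw [if_pos hc, hzz,
        ih (fun i hi => hm i (by omega)) (fun i hi => hmatch i (by omega))
          (x (j + 1)) (hm j (by omega)), hmatch j (by omega)]
    · rw [if_neg hc]

lemma glueP_eq_piece :
    ∀ j, (∀ i, i + 1 ≤ j + 1 → x i ≤ x (i + 1)) →
      (∀ i, i + 1 ≤ j → P i (x (i + 1)) = P (i + 1) (x (i + 1))) →
      ∀ i, i ≤ j → ∀ z, x i ≤ z → z ≤ x (i + 1) → glueP x P j z = P i z := by
  intro j
  induction j with
  | zero =>
    intro _ _ i hi z _ _
    interval_cases i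
    rfl
  | succ j ih =>
    intro hm hmatch i hi z hzl hzr
    show (if z ≤ x (j + 1) then glueP x P j z else P (j + 1) z) = P i z
    rcases Nat.lt_succ_iff_lt_or_eq.mp (Nat.lt_succ_of_le hi) with h | h
    · have hij : i ≤ j := by omega
      have hzj : z ≤ x (j + 1) :=
        le_trans hzr (chainx (n := j + 1 + 1) hm (i + 1) (j + 1) (by omega) (by omega))
      rw [if_pos hzj]
      exact ih (fun a ha => hm a (by omega)) (fun a ha => hmatch a (by omega)) i hij z hzl hzr
    · subst h
      by_cases hc : z ≤ x (j + 1)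
      · have hzz : z = x (j + 1) := le_antisymm hc hzl
        rw [if_pos hc, hzz,
          glueP_eq_of_ge j (fun a ha => hm a (by omega)) (fun a ha => hmatch a (by omega))
            (x (j + 1)) (hm j (by omega)), hmatch j (by omega)]
      · rw [if_neg hc]

lemma glueP_continuous :
    ∀ j, (∀ i, i + 1 ≤ j → x i ≤ x (i + 1)) →
      (∀ i, i + 1 ≤ j → P i (x (i + 1)) = P (i + 1) (x (i + 1))) →
      (∀ i, i ≤ j → Continuous (P i)) → Continuous (glueP x P j) := by
  intro j
  induction j with
  | zero => intro _ _ hc; exact hc 0 le_rfl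
  | succ j ih =>
    intro hm hmatch hc
    show Continuous fun z => if z ≤ x (j + 1) then glueP x P j z else P (j + 1) z
    refine Continuous.if_le ?_ (hc (j + 1) le_rfl) continuous_id continuous_const ?_
    · exact ih (fun a ha => hm a (by omega)) (fun a ha => hmatch a (by omega))
        (fun a ha => hc a (by omega))
    · intro z hz
      rw [hz, glueP_eq_of_ge j (fun a ha => hm a (by omega)) (fun a ha => hmatch a (by omega))
        (x (j + 1)) (hm j (by omega))]
      exact hmatch j (by omega)

end Glue
lemma algA (a α' Q : ℝ) (r : ℕ) (ha : a ≠ 0) (hD : a ^ (r + 1) - α' ≠ 0) :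
    Q / a ^ r / (a - α' / a ^ r) = Q / (a ^ (r + 1) - α') := by
  have h2 : a - α' / a ^ r = (a ^ (r + 1) - α') / a ^ r := by
    field_simp [pow_succ]
    ring
  rw [h2, div_div_div_comm, div_self (pow_ne_zero r ha), div_one]
lemma algB (a α' Y Q : ℝ) (r : ℕ) (ha : a ≠ 0) :
    (α' / a ^ r * Y + Q / a ^ r) / a = (α' * Y + Q) / a ^ (r + 1) := by
  rw [pow_succ]
  field_simp

section KeyProof

lemma keyStep (N : ℕ) (hN : 2 ≤ N) (x : ℕ → ℝ) (hx : ∀ i, i < N → x i < x (i + 1))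
    (β : ℕ → ℝ) (hβ : ∀ i, i < N → |β i| < aC x N i)
    (p p' : ℕ → ℝ → ℝ)
    (hpd : ∀ i, i < N → ∀ t ∈ Icc (x 0) (x N),
      HasDerivWithinAt (p i) (p' i t) (Icc (x 0) (x N)) t)
    (hp'c : ∀ i, i < N → ContinuousOn (p' i) (Icc (x 0) (x N)))
    (hjoin : ∀ i, i + 1 < N →
      (β i * (p' (N - 1) (x N) / (aC x N (N - 1) - β (N - 1))) + p' i (x N)) / aC x N i =
      (β (i + 1) * (p' 0 (x 0) / (aC x N 0 - β 0)) + p' (i + 1) (x 0)) / aC x N (i + 1))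
    (f : ℝ → ℝ) (hfc : ContinuousOn f (Icc (x 0) (x N)))
    (hfe : ∀ i, i < N → ∀ t ∈ Icc (x 0) (x N), f (Lm x N i t) = β i * f t + p i t) :
    ∃ g : ℝ → ℝ, Continuous g ∧
      (∀ t ∈ Icc (x 0) (x N), HasDerivWithinAt f (g t) (Icc (x 0) (x N)) t) ∧
      (∀ i, i < N → ∀ t ∈ Icc (x 0) (x N),
        g (Lm x N i t) = (β i * g t + p' i t) / aC x N i) := by
  have h1N : 1 ≤ N := by omega
  have hlt : x 0 < x N := hx0N h1N hx
  have hle : x 0 ≤ x N := hlt.le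
  set J : Set ℝ := Icc (x 0) (x N) with hJ
  have hapos : ∀ i, i < N → 0 < aC x N i := fun i hi => aC_pos h1N hx hi
  have ha1 : ∀ i, i < N → aC x N i < 1 := fun i hi => aC_lt_one hN hx hi
  have haβ : ∀ i, i < N → 0 < aC x N i - β i := by
    intro i hi
    have := hβ i hi
    have := abs_lt.mp this
    linarith
  -- clamp function
  set c : ℝ → ℝ := fun z => max (x 0) (min (x N) z) with hc
  have hc_cont : Continuous c := continuous_const.max (continuous_const.min continuous_id)
  have hc_mem : ∀ z, c z ∈ J := by
    intro z
    refine ⟨le_max_left _ _, max_le hle (min_le_left _ _)⟩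
  have hc_id : ∀ z ∈ J, c z = z := by
    intro z hz
    simp only [hc]
    rw [min_eq_right hz.2, max_eq_right hz.1]
  -- endpoints and target values
  set x0J : ↥J := ⟨x 0, left_mem_Icc.mpr hle⟩ with hx0J
  set xNJ : ↥J := ⟨x N, right_mem_Icc.mpr hle⟩ with hxNJ
  set y0' : ℝ := p' 0 (x 0) / (aC x N 0 - β 0) with hy0'
  set yN' : ℝ := p' (N - 1) (x N) / (aC x N (N - 1) - β (N - 1)) with hyN'
  -- pieces
  set Pg : C(↥J, ℝ) → ℕ → ℝ → ℝ := fun g i z =>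
    (β i * g ⟨c ((z - bC x N i) / aC x N i), hc_mem _⟩ +
      p' i (c ((z - bC x N i) / aC x N i))) / aC x N i with hPg
  have hPg_cont : ∀ g i, i < N → Continuous (Pg g i) := by
    intro g i hi
    have h1 : Continuous fun z : ℝ => (z - bC x N i) / aC x N i :=
      (continuous_id.sub continuous_const).div_const _
    have h2 : Continuous fun z : ℝ => c ((z - bC x N i) / aC x N i) := hc_cont.comp h1
    have h3 : Continuous fun z : ℝ =>
        (g ⟨c ((z - bC x N i) / aC x N i), hc_mem _⟩ : ℝ) :=
      g.continuous.comp (h2.subtype_mk _)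
    have h4 : Continuous fun z : ℝ => p' i (c ((z - bC x N i) / aC x N i)) :=
      ((hp'c i hi).comp_continuous h2 (fun z => hc_mem _))
    exact (((continuous_const.mul h3)).add h4).div_const _
  -- evaluation of pieces at images of L
  have hPg_eval : ∀ (g : C(↥J, ℝ)) i, i < N → ∀ t (ht : t ∈ J),
      Pg g i (Lm x N i t) = (β i * g ⟨t, ht⟩ + p' i t) / aC x N i := by
    intro g i hi t ht
    have hinv : (Lm x N i t - bC x N i) / aC x N i = t := Lm_inv (hapos i hi).ne' t
    simp only [hPg, hinv]
    have hsub : (⟨c t, hc_mem t⟩ : ↥J) = ⟨t, ht⟩ := Subtype.ext (hc_id t ht)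
    rw [hsub, hc_id t ht]
  -- matching at the nodes for g with prescribed endpoint values
  have hmatch : ∀ (g : C(↥J, ℝ)), g x0J = y0' → g xNJ = yN' →
      ∀ i, i + 1 ≤ N - 1 → Pg g i (x (i + 1)) = Pg g (i + 1) (x (i + 1))  := by
    intro g hg0 hgN i hi
    have hiN : i < N := by omega
    have hi1N : i + 1 < N := by omega
    have e1 : x (i + 1) = Lm x N i (x N) := (Lm_xN h1N hx i).symm
    have e2 : x (i + 1) = Lm x N (i + 1) (x 0) := (Lm_x0 h1N hx (i + 1)).symm
    calc Pg g i (x (i + 1)) = Pg g i (Lm x N i (x N)) := by rw [← e1]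
      _ = (β i * g xNJ + p' i (x N)) / aC x N i := by
          rw [hPg_eval g i hiN (x N) (right_mem_Icc.mpr hle)]
      _ = (β (i + 1) * g x0J + p' (i + 1) (x 0)) / aC x N (i + 1) := by
          rw [hg0, hgN, hy0', hyN']; exact hjoin i hi1N
      _ = Pg g (i + 1) (Lm x N (i + 1) (x 0)) := by
          rw [hPg_eval g (i + 1) hi1N (x 0) (left_mem_Icc.mpr hle)]
      _ = Pg g (i + 1) (x (i + 1)) := by rw [← e2]
  have hm : ∀ i, i + 1 ≤ N - 1 + 1 → x i ≤ x (i + 1) := fun i hi => (hx i (by omega)).le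
  have hm' : ∀ i, i + 1 ≤ N - 1 → x i ≤ x (i + 1) := fun i hi => hm i (by omega)
  have hN1 : N - 1 + 1 = N := by omega
  -- the closed subspace of candidate derivative functions
  set E : Set C(↥J, ℝ) := {g | g x0J = y0' ∧ g xNJ = yN'} with hE
  have hEclosed : IsClosed E := by
    have h1 : IsClosed {g : C(↥J, ℝ) | g x0J = y0'} :=
      isClosed_eq (continuous_eval_const x0J) continuous_const
    have h2 : IsClosed {g : C(↥J, ℝ) | g xNJ = yN'} :=
      isClosed_eq (continuous_eval_const xNJ) continuous_const
    exact h1.inter h2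
  haveI : CompleteSpace E := hEclosed.completeSpace_coe
  have hEnonempty : Nonempty E := by
    refine ⟨⟨⟨fun w => y0' + (w.1 - x 0) * ((yN' - y0') / (x N - x 0)), ?_⟩, ?_, ?_⟩⟩
    · exact continuous_const.add
        (((continuous_subtype_val.sub continuous_const)).mul continuous_const)
    · show y0' + (x 0 - x 0) * _ = y0'
      ring
    · show y0' + (x N - x 0) * ((yN' - y0') / (x N - x 0)) = yN'
      rw [mul_comm, div_mul_cancel₀ _ (sub_ne_zero.mpr hlt.ne')]
      ring
  -- the operator
  have hTcont : ∀ g : E, Continuous fun w : ↥J => glueP x (Pg g.1) (N - 1) w.1 := by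
    intro g
    exact (glueP_continuous (N - 1) hm' (hmatch g.1 g.2.1 g.2.2)
      (fun i hi => hPg_cont g.1 i (by omega))).comp continuous_subtype_val
  have hTval : ∀ g : E, ∀ i, i < N → ∀ z, x i ≤ z → z ≤ x (i + 1) →
      glueP x (Pg g.1) (N - 1) z = Pg g.1 i z := by
    intro g i hi z h1 h2
    exact glueP_eq_piece (N - 1) (by rw [hN1]; exact fun a ha => (hx a ha).le)
      (hmatch g.1 g.2.1 g.2.2) i (by omega) z h1 h2
  -- endpoint values of T g
  have hTend0 : ∀ g : E, glueP x (Pg g.1) (N - 1) (x 0) = y0' := by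
    intro g
    have h01 : x 0 ≤ x 1 := (hx 0 (by omega)).le
    rw [hTval g 0 (by omega) (x 0) le_rfl h01]
    have := hPg_eval g.1 0 (by omega) (x 0) (left_mem_Icc.mpr hle)
    rw [Lm_x0 h1N hx 0] at this
    rw [this]
    have hg0 : g.1 x0J = y0' := g.2.1
    rw [show (⟨x 0, left_mem_Icc.mpr hle⟩ : ↥J) = x0J from rfl, hg0, hy0']
    have h1 := (hapos 0 (by omega)).ne'
    have h2 := (haβ 0 (by omega)).ne'
    field_simp
    ring
  have hTendN : ∀ g : E, glueP x (Pg g.1) (N - 1) (x N) = yN' := by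
    intro g
    have hN1lt : N - 1 < N := by omega
    have hxx : x (N - 1) ≤ x N := by
      conv_rhs => rw [← hN1]
      exact (hx (N - 1) hN1lt).le
    have hxx2 : x N ≤ x (N - 1 + 1) := by rw [hN1]
    rw [hTval g (N - 1) hN1lt (x N) hxx hxx2]
    have := hPg_eval g.1 (N - 1) hN1lt (x N) (right_mem_Icc.mpr hle)
    have hLN : Lm x N (N - 1) (x N) = x N := by
      rw [Lm_xN h1N hx (N - 1), hN1]
    rw [hLN] at this
    rw [this]
    have hgN : g.1 xNJ = yN' := g.2.2
    rw [show (⟨x N, right_mem_Icc.mpr hle⟩ : ↥J) = xNJ from rfl, hgN, hyN']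
    have h1 := (hapos (N - 1) hN1lt).ne'
    have h2 := (haβ (N - 1) hN1lt).ne'
    field_simp
    ring
  set T : E → E := fun g =>
    ⟨⟨fun w => glueP x (Pg g.1) (N - 1) w.1, hTcont g⟩, hTend0 g, hTendN g⟩ with hT
  -- contraction
  have hrange : (Finset.range N).Nonempty := ⟨0, Finset.mem_range.mpr (by omega)⟩
  set cβ : ℝ := (Finset.range N).sup' hrange (fun i => |β i| / aC x N i) with hcβ
  have hcβ_lt1 : cβ < 1 := by
    rw [hcβ, Finset.sup'_lt_iff]
    intro i hi
    have hi' := Finset.mem_range.mp hi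
    rw [div_lt_one (hapos i hi')]
    exact hβ i hi'
  have hcβ_ge : ∀ i, i < N → |β i| / aC x N i ≤ cβ := by
    intro i hi
    rw [hcβ]
    exact Finset.le_sup' (fun i => |β i| / aC x N i) (Finset.mem_range.mpr hi)
  have hcβ_nonneg : 0 ≤ cβ :=
    le_trans (div_nonneg (abs_nonneg _) (hapos 0 (by omega)).le) (hcβ_ge 0 (by omega))
  have hlip : ∀ g g' : E, dist (T g) (T g') ≤ cβ * dist g g' := by
    intro g g'
    rw [Subtype.dist_eq, ContinuousMap.dist_le (mul_nonneg hcβ_nonneg dist_nonneg)]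
    intro w
    obtain ⟨i, hi, hw⟩ := cover h1N hx w.2
    have e1 : (T g).1 w = Pg g.1 i w.1 := hTval g i hi w.1 hw.1 hw.2
    have e2 : (T g').1 w = Pg g'.1 i w.1 := hTval g' i hi w.1 hw.1 hw.2
    rw [show ((T g).1 : C(↥J, ℝ)) w = Pg g.1 i w.1 from e1,
      show ((T g').1 : C(↥J, ℝ)) w = Pg g'.1 i w.1 from e2]
    simp only [hPg]
    set u : ↥J := ⟨c ((w.1 - bC x N i) / aC x N i), hc_mem _⟩ with hu
    rw [Real.dist_eq]
    have hdiff : (β i * g.1 u + p' i (c ((w.1 - bC x N i) / aC x N i))) / aC x N i -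
        (β i * g'.1 u + p' i (c ((w.1 - bC x N i) / aC x N i))) / aC x N i =
        (β i / aC x N i) * (g.1 u - g'.1 u) := by
      field_simp
      ring
    rw [hdiff, abs_mul, abs_div, abs_of_pos (hapos i hi)]
    have hd1 : |g.1 u - g'.1 u| ≤ dist g g' := by
      rw [Subtype.dist_eq, ← Real.dist_eq]
      exact ContinuousMap.dist_apply_le_dist u
    have hd2 : |β i| / aC x N i ≤ cβ := hcβ_ge i hi
    have hnn : (0:ℝ) ≤ |β i| / aC x N i := div_nonneg (abs_nonneg _) (hapos i hi).le
    calc |β i| / aC x N i * |g.1 u - g'.1 u| ≤ (|β i| / aC x N i) * dist g g' := by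
          exact mul_le_mul_of_nonneg_left hd1 hnn
      _ ≤ cβ * dist g g' := mul_le_mul_of_nonneg_right hd2 dist_nonneg
  have hK : ContractingWith (Real.toNNReal cβ) T := by
    constructor
    · exact_mod_cast Real.toNNReal_lt_one.mpr hcβ_lt1
    · apply LipschitzWith.of_dist_le_mul
      intro g g'
      rw [Real.coe_toNNReal _ hcβ_nonneg]
      exact hlip g g'
  obtain ⟨gE, hgE⟩ : ∃ gE : E, T gE = gE := ⟨hK.fixedPoint T, hK.fixedPoint_isFixedPt⟩
  -- the candidate derivative
  set g : ℝ → ℝ := fun z => gE.1 ⟨c z, hc_mem z⟩ with hg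
  have hgC : Continuous g := gE.1.continuous.comp (hc_cont.subtype_mk _)
  have hgJ : ∀ t (ht : t ∈ J), g t = gE.1 ⟨t, ht⟩ := by
    intro t ht
    exact congrArg gE.1 (Subtype.ext (hc_id t ht))
  have hgeq : ∀ i, i < N → ∀ t, t ∈ J → g (Lm x N i t) = (β i * g t + p' i t) / aC x N i := by
    intro i hi t ht
    have hLmem : Lm x N i t ∈ Icc (x i) (x (i + 1)) := Lm_mem h1N hx hi ht
    have hLJ : Lm x N i t ∈ J := piece_subset h1N hx hi hLmem
    rw [hgJ _ hLJ]
    have e3 : gE.1 ⟨Lm x N i t, hLJ⟩ = (T gE).1 ⟨Lm x N i t, hLJ⟩ := by rw [hgE]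
    have e4 : (T gE).1 ⟨Lm x N i t, hLJ⟩ = Pg gE.1 i (Lm x N i t) :=
      hTval gE i hi _ hLmem.1 hLmem.2
    rw [e3, e4, hPg_eval gE.1 i hi t ht, hgJ t ht]
  -- antiderivative
  set h : ℝ → ℝ := fun z => f (x 0) + ∫ u in (x 0)..z, g u with hh
  have hhd : ∀ z, HasDerivAt h (g z) z := by
    intro z
    exact (intervalIntegral.integral_hasDerivAt_right
      (hgC.intervalIntegrable (x 0) z)
      (hgC.stronglyMeasurableAtFilter _ _)
      hgC.continuousAt).const_add (f (x 0))
  have hhC : Continuous h := by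
    rw [continuous_iff_continuousAt]; exact fun z => (hhd z).continuousAt
  have hh0 : h (x 0) = f (x 0) := by
    simp only [hh, intervalIntegral.integral_same, add_zero]
  have hconst : ∀ i, i < N → ∀ t, t ∈ J →
      h (Lm x N i t) - (β i * h t + p i t) = h (x i) - (β i * h (x 0) + p i (x 0)) := by
    intro i hi t ht
    set D : ℝ → ℝ := fun t => h (Lm x N i t) - (β i * h t + p i t) with hD
    have kd : ∀ s, s ∈ J → HasDerivWithinAt D 0 J s := by
      intro s hs
      have hL : HasDerivAt (Lm x N i) (aC x N i) s := by
        have := ((hasDerivAt_id s).const_mul (aC x N i)).add_const (bC x N i)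
        simp only [mul_one] at this; exact this
      have A : HasDerivAt (fun t => h (Lm x N i t)) (g (Lm x N i s) * aC x N i) s :=
        (hhd (Lm x N i s)).comp s hL
      have B : HasDerivAt (fun t => β i * h t) (β i * g s) s := (hhd s).const_mul (β i)
      have C : HasDerivWithinAt (p i) (p' i s) J s := hpd i hi s hs
      have hcomb : HasDerivWithinAt D (g (Lm x N i s) * aC x N i - (β i * g s + p' i s)) J s :=
        (A.hasDerivWithinAt).sub ((B.hasDerivWithinAt).add C)
      have hzero : g (Lm x N i s) * aC x N i - (β i * g s + p' i s) = 0 := by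
        rw [hgeq i hi s hs, div_mul_cancel₀ _ (hapos i hi).ne']
        ring
      rwa [hzero] at hcomb
    have hDcont : ContinuousOn D J := fun s hs => (kd s hs).continuousWithinAt
    have hres := constant_of_has_deriv_right_zero (a := x 0) (b := x N) hDcont
      (fun s hs => (kd s (Ico_subset_Icc_self hs)).mono_of_mem_nhdsWithin
        (Icc_mem_nhdsGE_of_mem hs)) t ht
    simp only [hD] at hres
    rwa [Lm_x0 h1N hx i] at hres
  set e : ℝ → ℝ := fun z => h z - f z with he
  have he0 : e (x 0) = 0 := by simp only [he, hh0, sub_self]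
  have hee : ∀ i, i < N → ∀ t, t ∈ J → e (Lm x N i t) = β i * e t + e (x i) := by
    intro i hi t ht
    have h1 := hconst i hi t ht
    have h2 := hfe i hi t ht
    have h3 := hfe i hi (x 0) (left_mem_Icc.mpr hle)
    rw [Lm_x0 h1N hx i] at h3
    simp only [he]
    linear_combination h1 - h2 + h3 - β i * hh0
  have hsumβ : |∑ i ∈ Finset.range N, β i| < 1 := by
    calc |∑ i ∈ Finset.range N, β i| ≤ ∑ i ∈ Finset.range N, |β i| :=
          Finset.abs_sum_le_sum_abs _ _
      _ < ∑ i ∈ Finset.range N, aC x N i := by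
          apply Finset.sum_lt_sum_of_nonempty hrange
          intro i hi
          exact hβ i (Finset.mem_range.mp hi)
      _ = 1 := sum_aC h1N hx
  have heN : e (x N) = 0 := by
    have hsum : e (x N) - e (x 0) = (∑ i ∈ Finset.range N, β i) * e (x N) := by
      rw [← Finset.sum_range_sub (fun i => e (x i)), Finset.sum_mul]
      apply Finset.sum_congr rfl
      intro i hi
      have := hee i (Finset.mem_range.mp hi) (x N) (right_mem_Icc.mpr hle)
      rw [Lm_xN h1N hx i] at this
      linarith
    rw [he0, sub_zero] at hsum
    set S := ∑ i ∈ Finset.range N, β i with hS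
    have hprod : e (x N) * (1 - S) = 0 := by linarith [hsum]
    have hSne : 1 - S ≠ 0 := by
      intro hcon
      have : S = 1 := by linarith
      rw [this] at hsumβ
      simp at hsumβ
    exact (mul_eq_zero.mp hprod).resolve_right hSne
  have hnode : ∀ i, i ≤ N → e (x i) = 0 := by
    intro i
    induction i with
    | zero => intro _; exact he0
    | succ i ih =>
      intro hiN
      have hi : i < N := by omega
      have hrec := hee i hi (x N) (right_mem_Icc.mpr hle)
      rw [Lm_xN h1N hx i, heN] at hrec
      rw [hrec, ih (by omega)]
      ring
  have hee2 : ∀ i, i < N → ∀ t, t ∈ J → e (Lm x N i t) = β i * e t := by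
    intro i hi t ht
    rw [hee i hi t ht, hnode i (by omega)]
    ring
  have hecont : ContinuousOn e J := hhC.continuousOn.sub hfc
  obtain ⟨z0, hz0J, hmax⟩ :=
    isCompact_Icc.exists_isMaxOn (nonempty_Icc.mpr hle) hecont.abs
  have hzero : ∀ z, z ∈ J → e z = 0 := by
    have hez0 : |e z0| ≤ 0 := by
      obtain ⟨i, hi, hz0p⟩ := cover h1N hx hz0J
      obtain ⟨ht0J, hLt0⟩ := Lm_surj h1N hx hi hz0p
      have h6 : |e z0| = |β i| * |e ((z0 - bC x N i) / aC x N i)| := by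
        conv_lhs => rw [← hLt0]
        rw [hee2 i hi _ ht0J, abs_mul]
      have h7 : |e ((z0 - bC x N i) / aC x N i)| ≤ |e z0| := hmax ht0J
      have h8 : |β i| < 1 := lt_trans (hβ i hi) (ha1 i hi)
      nlinarith [abs_nonneg (e z0), abs_nonneg (β i),
        abs_nonneg (e ((z0 - bC x N i) / aC x N i))]
    intro z hz
    have := le_trans (hmax hz) hez0
    exact abs_nonpos_iff.mp this
  refine ⟨g, hgC, ?_, fun i hi t ht => hgeq i hi t ht⟩
  intro t ht
  have hfh : ∀ z ∈ J, f z = h z := by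
    intro z hz
    have hz' := hzero z hz
    simp only [he] at hz'
    linarith
  exact ((hhd t).hasDerivWithinAt).congr hfh (hfh t ht)

end KeyProof

/-- If `|α i| < a i ^ k`, `q i ∈ C^k(I)`, the endpoint conditions hold and the derivative
join-up conditions hold, then the fractal interpolation function is `C^k` and its `r`-th
derivative satisfies the self-referential equation with maps `F_{i,r}`. -/
theorem stmt3
    (N k : ℕ) (hN : 2 ≤ N) (hk : 1 ≤ k)
    (x y : ℕ → ℝ)
    (hx : ∀ i, i < N → x i < x (i + 1))
    (α : ℕ → ℝ) (hα : ∀ i, i < N → |α i| < 1)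
    (q : ℕ → ℝ → ℝ)
    (hαk : ∀ i, i < N → |α i| < (aC x N i) ^ k)
    (hq : ∀ i, i < N → ContDiffOn ℝ k (q i) (Icc (x 0) (x N)))
    (hq0 : ∀ i, i < N → q i (x 0) = y i - α i * y 0)
    (hqN : ∀ i, i < N → q i (x N) = y (i + 1) - α i * y N)
    (hjoin : ∀ i, 1 ≤ i → i < N → ∀ r, 1 ≤ r → r ≤ k →
      (α (i - 1) *
          (iteratedDerivWithin r (q (N - 1)) (Icc (x 0) (x N)) (x N) /
            ((aC x N (N - 1)) ^ r - α (N - 1))) +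
        iteratedDerivWithin r (q (i - 1)) (Icc (x 0) (x N)) (x N)) / (aC x N (i - 1)) ^ r =
      (α i *
          (iteratedDerivWithin r (q 0) (Icc (x 0) (x N)) (x 0) / ((aC x N 0) ^ r - α 0)) +
        iteratedDerivWithin r (q i) (Icc (x 0) (x N)) (x 0)) / (aC x N i) ^ r)
    (f : ℝ → ℝ)
    (hfc : ContinuousOn f (Icc (x 0) (x N)))
    (hfe : ∀ i, i < N → ∀ t ∈ Icc (x 0) (x N), f (Lm x N i t) = α i * f t + q i t) :
    ContDiffOn ℝ k f (Icc (x 0) (x N)) ∧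
    ∀ r, 1 ≤ r → r ≤ k → ∀ i, i < N → ∀ t ∈ Icc (x 0) (x N),
      iteratedDerivWithin r f (Icc (x 0) (x N)) (Lm x N i t) =
        (α i * iteratedDerivWithin r f (Icc (x 0) (x N)) t +
          iteratedDerivWithin r (q i) (Icc (x 0) (x N)) t) / (aC x N i) ^ r := by
  have h1N : 1 ≤ N := by omega
  have hlt : x 0 < x N := hx0N h1N hx
  have hud : UniqueDiffOn ℝ (Icc (x 0) (x N)) := uniqueDiffOn_Icc hlt
  have hapos : ∀ i, i < N → 0 < aC x N i := fun i hi => aC_pos h1N hx hi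
  have ha1 : ∀ i, i < N → aC x N i < 1 := fun i hi => aC_lt_one hN hx hi
  have hQd : ∀ r, r < k → ∀ i, i < N → ∀ t ∈ Icc (x 0) (x N),
      HasDerivWithinAt (iteratedDerivWithin r (q i) (Icc (x 0) (x N)))
        (iteratedDerivWithin (r + 1) (q i) (Icc (x 0) (x N)) t) (Icc (x 0) (x N)) t := by
    intro r hr i hi t ht
    have hdiff : DifferentiableOn ℝ (iteratedDerivWithin r (q i) (Icc (x 0) (x N)))
        (Icc (x 0) (x N)) :=
      (hq i hi).differentiableOn_iteratedDerivWithin (by exact_mod_cast hr) hud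
    have h1 := (hdiff t ht).hasDerivWithinAt
    rw [iteratedDerivWithin_succ]
    exact h1
  have hQc : ∀ r, r ≤ k → ∀ i, i < N →
      ContinuousOn (iteratedDerivWithin r (q i) (Icc (x 0) (x N))) (Icc (x 0) (x N)) :=
    fun r hr i hi => (hq i hi).continuousOn_iteratedDerivWithin (by exact_mod_cast hr) hud
  have hpow : ∀ i, i < N → ∀ m, m ≤ k → |α i| < aC x N i ^ m := by
    intro i hi m h2
    exact lt_of_lt_of_le (hαk i hi)
      (pow_le_pow_of_le_one (hapos i hi).le (ha1 i hi).le h2)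
  have main : ∀ r, r ≤ k →
      (ContinuousOn (iteratedDerivWithin r f (Icc (x 0) (x N))) (Icc (x 0) (x N)) ∧
       (∀ i, i < N → ∀ t ∈ Icc (x 0) (x N),
         iteratedDerivWithin r f (Icc (x 0) (x N)) (Lm x N i t) =
           (α i * iteratedDerivWithin r f (Icc (x 0) (x N)) t +
            iteratedDerivWithin r (q i) (Icc (x 0) (x N)) t) / aC x N i ^ r) ∧
       (∀ s, s + 1 ≤ r → ∀ t ∈ Icc (x 0) (x N),
         HasDerivWithinAt (iteratedDerivWithin s f (Icc (x 0) (x N)))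
           (iteratedDerivWithin (s + 1) f (Icc (x 0) (x N)) t) (Icc (x 0) (x N)) t)) := by
    intro r
    induction r with
    | zero =>
      intro _
      rw [iteratedDerivWithin_zero]
      refine ⟨hfc, ?_, ?_⟩
      · intro i hi t ht
        rw [iteratedDerivWithin_zero, pow_zero, div_one]
        exact hfe i hi t ht
      · intro s hs
        omega
    | succ r ih =>
      intro hrk
      obtain ⟨ihc, ihe, ihd⟩ := ih (by omega)
      have hane : ∀ i, i < N → aC x N i ≠ 0 := fun i hi => (hapos i hi).ne'
      -- apply the key construction to the r-th derivative
      obtain ⟨g, hgc, hgd, hgeq⟩ := keyStep N hN x hx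
        (fun i => α i / aC x N i ^ r)
        (by
          intro i hi
          rw [abs_div, abs_of_pos (pow_pos (hapos i hi) r), div_lt_iff₀ (pow_pos (hapos i hi) r)]
          have := hpow i hi (r + 1) hrk
          rw [pow_succ] at this
          linarith)
        (fun i t => iteratedDerivWithin r (q i) (Icc (x 0) (x N)) t / aC x N i ^ r)
        (fun i t => iteratedDerivWithin (r + 1) (q i) (Icc (x 0) (x N)) t / aC x N i ^ r)
        (fun i hi t ht => (hQd r (by omega) i hi t ht).div_const _)
        (fun i hi => (hQc (r + 1) hrk i hi).div_const _)
        (by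
          -- join conditions
          intro i hi1
          have hNlt : N - 1 < N := by omega
          have h0lt : 0 < N := by omega
          have hD1 : aC x N (N - 1) ^ (r + 1) - α (N - 1) ≠ 0 := by
            have := (abs_lt.mp (hpow (N - 1) hNlt (r + 1) hrk)).2
            linarith
          have hD0 : aC x N 0 ^ (r + 1) - α 0 ≠ 0 := by
            have := (abs_lt.mp (hpow 0 h0lt (r + 1) hrk)).2
            linarith
          have hj := hjoin (i + 1) (by omega) hi1 (r + 1) (by omega) hrk
          simp only [Nat.add_sub_cancel] at hj
          rw [algA _ _ _ r (hane (N - 1) hNlt) hD1, algA _ _ _ r (hane 0 h0lt) hD0,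
            algB _ _ _ _ r (hane i (by omega)), algB _ _ _ _ r (hane (i + 1) hi1)]
          exact hj)
        (iteratedDerivWithin r f (Icc (x 0) (x N))) ihc
        (by
          intro i hi t ht
          rw [ihe i hi t ht]
          have hcne := pow_ne_zero r (hane i hi)
          show _ = α i / aC x N i ^ r * _ + iteratedDerivWithin r (q i) (Icc (x 0) (x N)) t / aC x N i ^ r
          field_simp)
      have hDsucc : ∀ t ∈ Icc (x 0) (x N),
          iteratedDerivWithin (r + 1) f (Icc (x 0) (x N)) t = g t := by
        intro t ht
        rw [iteratedDerivWithin_succ]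
        exact (hgd t ht).derivWithin (hud t ht)
      refine ⟨?_, ?_, ?_⟩
      · exact ContinuousOn.congr hgc.continuousOn hDsucc
      · intro i hi t ht
        have hLJ : Lm x N i t ∈ Icc (x 0) (x N) :=
          piece_subset h1N hx hi (Lm_mem h1N hx hi ht)
        rw [hDsucc _ hLJ, hDsucc t ht, hgeq i hi t ht]
        exact algB _ _ _ _ r (hane i hi)
      · intro s hs t ht
        rcases Nat.lt_or_ge s r with h | h
        · exact ihd s (by omega) t ht
        · have hsr : s = r := by omega
          subst hsr
          rw [hDsucc t ht]
          exact hgd t ht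
  constructor
  · rw [contDiffOn_nat_iff_continuousOn_differentiableOn_deriv hud]
    exact ⟨fun m hm => (main m hm).1,
      fun m hm t ht => ((main k le_rfl).2.2 m (by omega) t ht).differentiableWithinAt⟩
  · intro r _ hrk i hi t ht
    exact (main r hrk).2.1 i hi t ht
end

section
/- Assume each q_i is Lipschitz continuous. Let f ∈ B(I) be the unique fixed point of the operator T (the bounded fractal function), let G(f) = {(x, f(x)) : x ∈ I} be its graph, and let W_i(x, y) = (L_i(x), α_i y + q_i(x)). Then the closure of G(f) in I × ℝ is a nonempty compact set satisfying cl(G(f)) = ⋃_{i=1}^N W_i(cl(G(f))); moreover cl(G(f)) is the unique nonempty compact subset A of I × ℝ with A = ⋃_{i=1}^N W_i(A). -/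
open Set

/-- The inverse `L i ⁻¹ t = (t - b i) / a i` of the affine map `L i`. -/
noncomputable def LmInv (x : ℕ → ℝ) (N i : ℕ) (t : ℝ) : ℝ := (t - bC x N i) / aC x N i

open EMetric Metric Filter
open scoped NNReal ENNReal

lemma attractor_unique {X : Type*} [MetricSpace X] {ι : Type*} (s : Finset ι)
    (W : ι → X → X) (D : Set X) (r : ℝ≥0) (hr : r < 1)
    (hL : ∀ i ∈ s, LipschitzOnWith r (W i) D)
    {A B : Set X} (hAne : A.Nonempty) (hAc : IsCompact A) (hAD : A ⊆ D)
    (hAeq : A = ⋃ i ∈ s, W i '' A)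
    (hBne : B.Nonempty) (hBc : IsCompact B) (hBD : B ⊆ D)
    (hBeq : B = ⋃ i ∈ s, W i '' B) : A = B := by
  have hfin : hausdorffEDist A B ≠ ⊤ :=
    hausdorffEDist_ne_top_of_nonempty_of_bounded hAne hBne hAc.isBounded hBc.isBounded
  have step : ∀ p ∈ A, ∃ y ∈ B, edist p y ≤ (r : ℝ≥0∞) * hausdorffEDist A B := by
    intro p hp
    rw [hAeq, mem_iUnion₂] at hp
    obtain ⟨i, hi, a, ha, rfl⟩ := hp
    obtain ⟨b, hb, hab⟩ := hBc.exists_infEDist_eq_edist hBne a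
    refine ⟨W i b, ?_, ?_⟩
    · rw [hBeq, mem_iUnion₂]; exact ⟨i, hi, mem_image_of_mem _ hb⟩
    · calc edist (W i a) (W i b) ≤ r * edist a b := hL i hi (hAD ha) (hBD hb)
        _ = r * infEDist a B := by rw [hab]
        _ ≤ r * hausdorffEDist A B :=
          mul_le_mul_right (infEDist_le_hausdorffEDist_of_mem ha) _
  have step' : ∀ p ∈ B, ∃ y ∈ A, edist p y ≤ (r : ℝ≥0∞) * hausdorffEDist A B := by
    intro p hp
    rw [hBeq, mem_iUnion₂] at hp
    obtain ⟨i, hi, a, ha, rfl⟩ := hp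
    obtain ⟨b, hb, hab⟩ := hAc.exists_infEDist_eq_edist hAne a
    refine ⟨W i b, ?_, ?_⟩
    · rw [hAeq, mem_iUnion₂]; exact ⟨i, hi, mem_image_of_mem _ hb⟩
    · calc edist (W i a) (W i b) ≤ r * edist a b := hL i hi (hBD ha) (hAD hb)
        _ = r * infEDist a A := by rw [hab]
        _ ≤ r * hausdorffEDist A B := by
          rw [hausdorffEDist_comm]
          exact mul_le_mul_right (infEDist_le_hausdorffEDist_of_mem ha) _
  have hle : hausdorffEDist A B ≤ (r : ℝ≥0∞) * hausdorffEDist A B :=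
    hausdorffEDist_le_of_mem_edist step step'
  have hzero : hausdorffEDist A B = 0 := by
    by_contra h0
    have : (r : ℝ≥0∞) * hausdorffEDist A B < 1 * hausdorffEDist A B := by
      exact ENNReal.mul_lt_mul_left h0 hfin (by exact_mod_cast hr)
    rw [one_mul] at this
    exact absurd (lt_of_le_of_lt hle this) (lt_irrefl _)
  have := hausdorffEDist_zero_iff_closure_eq_closure.mp hzero
  rwa [hAc.isClosed.closure_eq, hBc.isClosed.closure_eq] at this

lemma err_tendsto (β Cd e0 : ℝ) (hβ0 : 0 < β) (hβ1 : β < 1)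
    (e : ℕ → ℝ) (he0 : e 0 ≤ e0) (hpos : ∀ n, 0 ≤ e n)
    (hrec : ∀ n, e (n + 1) ≤ β * e n + Cd * β ^ n) :
    Tendsto e atTop (nhds 0) := by
  have hb : ∀ n, e n ≤ β ^ n * e0 + (n : ℝ) * (Cd / β) * β ^ n := by
    intro n
    induction n with
    | zero => simpa using he0
    | succ n ih =>
      have h1 : e (n + 1) ≤ β * e n + Cd * β ^ n := hrec n
      have h2 : β * e n ≤ β * (β ^ n * e0 + (n : ℝ) * (Cd / β) * β ^ n) :=
        mul_le_mul_of_nonneg_left ih hβ0.le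
      have h3 : β * (β ^ n * e0 + (n : ℝ) * (Cd / β) * β ^ n) + Cd * β ^ n
          = β ^ (n + 1) * e0 + ((n : ℕ) + 1 : ℝ) * (Cd / β) * β ^ (n + 1) := by
        field_simp
        ring
      push_cast at h3 ⊢
      linarith
  have h1 : Tendsto (fun n : ℕ => β ^ n * e0) atTop (nhds (0 * e0)) :=
    (tendsto_pow_atTop_nhds_zero_of_lt_one hβ0.le hβ1).mul_const e0
  have h2 : Tendsto (fun n : ℕ => Cd / β * ((n : ℝ) ^ 1 * β ^ n)) atTop (nhds (Cd / β * 0)) :=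
    (summable_pow_mul_geometric_of_norm_lt_one (R := ℝ) 1
      (by rwa [Real.norm_eq_abs, abs_of_pos hβ0])).tendsto_atTop_zero.const_mul _
  have h3 : Tendsto (fun n : ℕ => β ^ n * e0 + Cd / β * ((n : ℝ) ^ 1 * β ^ n)) atTop (nhds 0) := by
    have := h1.add h2; simpa using this
  exact squeeze_zero hpos (fun n => (hb n).trans (le_of_eq (by ring))) h3

set_option maxHeartbeats 2000000 in
/-- The closure of the graph of the bounded fractal function is the unique nonempty compact
subset `A` of `I × ℝ` with `A = ⋃ i, W i '' A`, where `W i (x,y) = (L i x, α i y + q i x)`. -/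
theorem stmt8
    (N : ℕ) (hN : 2 ≤ N)
    (x : ℕ → ℝ)
    (hx : ∀ i, i < N → x i < x (i + 1))
    (α : ℕ → ℝ) (hα : ∀ i, i < N → |α i| < 1)
    (q : ℕ → ℝ → ℝ)
    (hq : ∀ i, i < N → ∃ C, ∀ u ∈ Icc (x 0) (x N), ∀ v ∈ Icc (x 0) (x N),
      |q i u - q i v| ≤ C * |u - v|)
    (T : (ℝ → ℝ) → ℝ → ℝ)
    (hT : ∀ g : ℝ → ℝ, ∀ i, i < N → ∀ t : ℝ,
      t ∈ Ico (x i) (x (i + 1)) ∨ (i = N - 1 ∧ t = x N) →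
      T g t = α i * g (LmInv x N i t) + q i (LmInv x N i t))
    (f : ℝ → ℝ)
    (hfb : ∃ M, ∀ t ∈ Icc (x 0) (x N), |f t| ≤ M)
    (hfix : ∀ t ∈ Icc (x 0) (x N), T f t = f t) :
    ∃ A : Set (ℝ × ℝ),
      A = closure ((fun t => (t, f t)) '' Icc (x 0) (x N)) ∧
      A.Nonempty ∧ IsCompact A ∧ A ⊆ (Icc (x 0) (x N)) ×ˢ (univ : Set ℝ) ∧
      A = ⋃ i ∈ Finset.range N, (fun p : ℝ × ℝ => (Lm x N i p.1, α i * p.2 + q i p.1)) '' A ∧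
      ∀ B : Set (ℝ × ℝ), B.Nonempty → IsCompact B →
        B ⊆ (Icc (x 0) (x N)) ×ˢ (univ : Set ℝ) →
        B = ⋃ i ∈ Finset.range N, (fun p : ℝ × ℝ => (Lm x N i p.1, α i * p.2 + q i p.1)) '' B →
        B = A := by
  obtain ⟨M, hM⟩ := hfb
  have hNpos : 0 < N := lt_of_lt_of_le two_pos hN
  -- monotonicity of the knots
  have hmono : ∀ i j, i ≤ j → j ≤ N → x i ≤ x j := by
    have key : ∀ k i, i + k ≤ N → x i ≤ x (i + k) := by
      intro k
      induction k with
      | zero => intro i _; simp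
      | succ k ih =>
        intro i h
        exact le_of_lt (lt_of_le_of_lt (ih i (by omega)) (hx (i + k) (by omega)))
    intro i j hij hjN
    have := key (j - i) i (by omega)
    rwa [show i + (j - i) = j by omega] at this
  have hsm : ∀ i j, i < j → j ≤ N → x i < x j := by
    intro i j hij hjN
    calc x i ≤ x (j - 1) := hmono i (j - 1) (by omega) (by omega)
      _ < x j := by
        have := hx (j - 1) (by omega)
        rwa [show j - 1 + 1 = j by omega] at this
  have hd : 0 < x N - x 0 := sub_pos.mpr (hsm 0 N hNpos le_rfl)
  have hdne : x N - x 0 ≠ 0 := ne_of_gt hd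
  have hx0N : x 0 ≤ x N := le_of_lt (hsm 0 N hNpos le_rfl)
  -- properties of the affine maps
  have ha_pos : ∀ i, i < N → 0 < aC x N i := fun i hi =>
    div_pos (sub_pos.mpr (hx i hi)) hd
  have hLm0 : ∀ i, Lm x N i (x 0) = x i := by
    intro i; unfold Lm aC bC; field_simp; ring
  have hLmN : ∀ i, Lm x N i (x N) = x (i + 1) := by
    intro i; unfold Lm aC bC; field_simp; ring
  have hLmd : ∀ i t s, Lm x N i t - Lm x N i s = aC x N i * (t - s) := by
    intro i t s; unfold Lm; ring
  have ha_lt : ∀ i, i < N → aC x N i < 1 := by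
    intro i hi
    rw [aC, div_lt_one hd]
    rcases Nat.eq_zero_or_pos i with h0 | h0
    · subst h0
      have : x 1 < x N := hsm 1 N (by omega) le_rfl
      linarith
    · have h1 : x 0 < x i := hsm 0 i h0 (by omega)
      have h2 : x (i + 1) ≤ x N := hmono (i + 1) N (by omega) le_rfl
      linarith
  have hLmInv_Lm : ∀ i, i < N → ∀ t, LmInv x N i (Lm x N i t) = t := by
    intro i hi t
    have := ne_of_gt (ha_pos i hi)
    unfold LmInv Lm
    field_simp
    ring
  have hLm_mem : ∀ i, i < N → ∀ t, x 0 ≤ t → t ≤ x N → Lm x N i t ∈ Icc (x 0) (x N) := by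
    intro i hi t h0 h1
    have e0 : x i ≤ Lm x N i t := by
      have := hLmd i t (x 0)
      rw [hLm0 i] at this
      nlinarith [ha_pos i hi]
    have e1 : Lm x N i t ≤ x (i + 1) := by
      have := hLmd i (x N) t
      rw [hLmN i] at this
      nlinarith [ha_pos i hi]
    exact ⟨le_trans (hmono 0 i (by omega) (by omega)) e0,
      le_trans e1 (hmono (i + 1) N (by omega) le_rfl)⟩
  -- the functional equation on the graph
  have hgraph : ∀ i, i < N → ∀ t, x 0 ≤ t → t < x N →
      f (Lm x N i t) = α i * f t + q i t := by
    intro i hi t h0 h1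
    have hmem : Lm x N i t ∈ Ico (x i) (x (i + 1)) := by
      constructor
      · have := hLmd i t (x 0); rw [hLm0 i] at this
        nlinarith [ha_pos i hi]
      · have := hLmd i (x N) t; rw [hLmN i] at this
        nlinarith [ha_pos i hi]
    have hmem' : Lm x N i t ∈ Icc (x 0) (x N) := hLm_mem i hi t h0 (le_of_lt h1)
    have := hT f i hi (Lm x N i t) (Or.inl hmem)
    rw [hfix _ hmem', hLmInv_Lm i hi t] at this
    exact this
  have hN1 : N - 1 + 1 = N := by omega
  have hN1lt : N - 1 < N := by omega
  have hLmNfix : Lm x N (N - 1) (x N) = x N := by rw [hLmN, hN1]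
  have hLmInvN : LmInv x N (N - 1) (x N) = x N := by
    conv_lhs => rw [← hLmNfix]
    exact hLmInv_Lm _ hN1lt _
  have hfN : f (x N) = α (N - 1) * f (x N) + q (N - 1) (x N) := by
    have := hT f (N - 1) hN1lt (x N) (Or.inr ⟨rfl, rfl⟩)
    rw [hfix _ ⟨hx0N, le_rfl⟩, hLmInvN] at this
    exact this
    -- Lipschitz constants for the q i
  set C : ℕ → ℝ := fun i => if h : i < N then max (hq i h).choose 0 else 0 with hCdef
  have hC0 : ∀ i, 0 ≤ C i := by
    intro i; simp only [hCdef]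
    split <;> simp
  have hCq : ∀ i, i < N → ∀ u ∈ Icc (x 0) (x N), ∀ v ∈ Icc (x 0) (x N),
      |q i u - q i v| ≤ C i * |u - v| := by
    intro i hi u hu v hv
    have h1 := (hq i hi).choose_spec u hu v hv
    have h2 : (hq i hi).choose * |u - v| ≤ C i * |u - v| := by
      apply mul_le_mul_of_nonneg_right _ (abs_nonneg _)
      simp only [hCdef]; rw [dif_pos hi]; exact le_max_left _ _
    exact h1.trans h2
  -- the graph and its closure
  set G : Set (ℝ × ℝ) := (fun t => (t, f t)) '' Icc (x 0) (x N) with hGdef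
  set A : Set (ℝ × ℝ) := closure G with hAdef
  set W : ℕ → ℝ × ℝ → ℝ × ℝ :=
    fun i p => (Lm x N i p.1, α i * p.2 + q i p.1) with hWdef
  have hGsub : G ⊆ Icc (x 0) (x N) ×ˢ Icc (-M) M := by
    rintro p ⟨t, ht, rfl⟩
    exact ⟨ht, abs_le.mp (hM t ht)⟩
  have hAsub : A ⊆ Icc (x 0) (x N) ×ˢ Icc (-M) M :=
    closure_minimal hGsub (isClosed_Icc.prod isClosed_Icc)
  have hAcomp : IsCompact A :=
    (isCompact_Icc.prod isCompact_Icc).of_isClosed_subset isClosed_closure hAsub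
  have hAne : A.Nonempty :=
    ⟨(x 0, f (x 0)), subset_closure (mem_image_of_mem _ ⟨le_rfl, hx0N⟩)⟩
  have hAuniv : A ⊆ Icc (x 0) (x N) ×ˢ (univ : Set ℝ) :=
    fun p hp => ⟨(hAsub hp).1, trivial⟩
  -- left-continuity at x N : the limit points W i (x N, f (x N)) lie in A
  have hlimpt : ∀ i, i < N → (Lm x N i (x N), α i * f (x N) + q i (x N)) ∈ A := by
    intro i hi
    set a : ℝ := aC x N (N - 1) with hadef
    have ha0 : 0 < a := ha_pos _ hN1lt
    have ha1 : a < 1 := ha_lt _ hN1lt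
    set t : ℕ → ℝ := fun n => x N - a ^ n * (x N - x 0) with htdef
    have ht_mem : ∀ n, x 0 ≤ t n ∧ t n < x N := by
      intro n
      have h1 : 0 < a ^ n := pow_pos ha0 n
      have h2 : a ^ n ≤ 1 := pow_le_one₀ ha0.le ha1.le
      constructor
      · simp only [htdef]; nlinarith
      · simp only [htdef]; nlinarith
    have ht_succ : ∀ n, t (n + 1) = Lm x N (N - 1) (t n) := by
      intro n
      have h1 : Lm x N (N - 1) (t n) - Lm x N (N - 1) (x N) = a * (t n - x N) :=
        hLmd (N - 1) (t n) (x N)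
      rw [hLmNfix] at h1
      have h2 : t n = x N - a ^ n * (x N - x 0) := rfl
      have h3 : t (n + 1) = x N - a ^ (n + 1) * (x N - x 0) := rfl
      rw [h2] at h1
      rw [h3, pow_succ]
      linarith
    have ht_tend : Tendsto t atTop (nhds (x N)) := by
      have h1 : Tendsto (fun n : ℕ => a ^ n * (x N - x 0)) atTop (nhds (0 * (x N - x 0))) :=
        (tendsto_pow_atTop_nhds_zero_of_lt_one ha0.le ha1).mul_const _
      rw [zero_mul] at h1
      have := (tendsto_const_nhds : Tendsto (fun _ : ℕ => x N) atTop (nhds (x N))).sub h1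
      simpa using this
    -- the error sequence
    set β : ℝ := max a |α (N - 1)| with hβdef
    have hβ0 : 0 < β := lt_of_lt_of_le ha0 (le_max_left _ _)
    have hβ1 : β < 1 := max_lt ha1 (hα _ hN1lt)
    set e : ℕ → ℝ := fun n => |f (t n) - f (x N)| with hedef
    have herec : ∀ n, e (n + 1) ≤ β * e n + (C (N - 1) * (x N - x 0)) * β ^ n := by
      intro n
      obtain ⟨h0, h1⟩ := ht_mem n
      have hfe : f (t (n + 1)) = α (N - 1) * f (t n) + q (N - 1) (t n) := by
        rw [ht_succ n]; exact hgraph _ hN1lt _ h0 h1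
      have hqe : |q (N - 1) (t n) - q (N - 1) (x N)| ≤ C (N - 1) * |t n - x N| :=
        hCq _ hN1lt _ ⟨h0, h1.le⟩ _ ⟨hx0N, le_rfl⟩
      have htd : |t n - x N| = a ^ n * (x N - x 0) := by
        simp only [htdef]
        rw [show x N - a ^ n * (x N - x 0) - x N = -(a ^ n * (x N - x 0)) by ring, abs_neg,
          abs_of_nonneg (by positivity)]
      have key : f (t (n + 1)) - f (x N)
          = α (N - 1) * (f (t n) - f (x N)) + (q (N - 1) (t n) - q (N - 1) (x N)) := by
        rw [hfe]; linarith [hfN]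
      have hbd : e (n + 1) ≤ |α (N - 1)| * e n + C (N - 1) * (a ^ n * (x N - x 0)) := by
        simp only [hedef]
        rw [key]
        calc |α (N - 1) * (f (t n) - f (x N)) + (q (N - 1) (t n) - q (N - 1) (x N))|
            ≤ |α (N - 1) * (f (t n) - f (x N))| + |q (N - 1) (t n) - q (N - 1) (x N)| :=
              abs_add_le _ _
          _ ≤ |α (N - 1)| * |f (t n) - f (x N)| + C (N - 1) * (a ^ n * (x N - x 0)) := by
              rw [abs_mul]
              exact add_le_add le_rfl (by rw [← htd]; exact hqe)
      have h2 : |α (N - 1)| * e n ≤ β * e n :=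
        mul_le_mul_of_nonneg_right (le_max_right _ _) (abs_nonneg _)
      have h3 : a ^ n ≤ β ^ n := pow_le_pow_left₀ ha0.le (le_max_left _ _) n
      have h4 : C (N - 1) * (a ^ n * (x N - x 0)) ≤ C (N - 1) * (x N - x 0) * β ^ n := by
        have := mul_le_mul_of_nonneg_left h3 (mul_nonneg (hC0 (N - 1)) hd.le)
        nlinarith [hC0 (N - 1), hd.le]
      linarith
    have he_tend : Tendsto e atTop (nhds 0) :=
      err_tendsto β _ (2 * M) hβ0 hβ1 e
        (by
          have h0 := ht_mem 0
          have := abs_sub (f (t 0)) (f (x N))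
          have hf1 := hM (t 0) ⟨(h0).1, (h0).2.le⟩
          have hf2 := hM (x N) ⟨hx0N, le_rfl⟩
          calc e 0 ≤ |f (t 0)| + |f (x N)| := abs_sub _ _
            _ ≤ 2 * M := by linarith)
        (fun n => abs_nonneg _) herec
    have hf_tend : Tendsto (fun n => f (t n)) atTop (nhds (f (x N))) := by
      rw [tendsto_iff_dist_tendsto_zero]
      simpa [Real.dist_eq, hedef] using he_tend
    have hq_tend : Tendsto (fun n => q i (t n)) atTop (nhds (q i (x N))) := by
      rw [tendsto_iff_dist_tendsto_zero]
      apply squeeze_zero (fun n => dist_nonneg)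
        (g := fun n => C i * |t n - x N|)
        (fun n => by
          rw [Real.dist_eq]
          exact hCq i hi _ ⟨(ht_mem n).1, (ht_mem n).2.le⟩ _ ⟨hx0N, le_rfl⟩)
      have h1 : Tendsto (fun n => t n - x N) atTop (nhds (x N - x N)) :=
        ht_tend.sub tendsto_const_nhds
      rw [sub_self] at h1
      have h2 : Tendsto (fun n => C i * |t n - x N|) atTop (nhds (C i * |0|)) :=
        (h1.abs).const_mul _
      simpa using h2
    have hLm_tend : Tendsto (fun n => Lm x N i (t n)) atTop (nhds (Lm x N i (x N))) := by
      unfold Lm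
      exact (ht_tend.const_mul _).add_const _
    have hy_tend : Tendsto (fun n => α i * f (t n) + q i (t n)) atTop
        (nhds (α i * f (x N) + q i (x N))) :=
      ((hf_tend.const_mul _).add hq_tend)
    apply mem_closure_of_tendsto (hLm_tend.prodMk_nhds hy_tend)
    filter_upwards with n
    have hmem := ht_mem n
    have : (Lm x N i (t n), α i * f (t n) + q i (t n)) = (Lm x N i (t n), f (Lm x N i (t n))) := by
      rw [hgraph i hi _ hmem.1 hmem.2]
    rw [this]
    exact mem_image_of_mem _ (hLm_mem i hi _ hmem.1 hmem.2.le)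
    -- continuity of the maps W i
  have hqLip : ∀ i, i < N → LipschitzOnWith (C i).toNNReal (q i) (Icc (x 0) (x N)) := by
    intro i hi
    apply LipschitzOnWith.of_dist_le_mul
    intro u hu v hv
    rw [Real.dist_eq, Real.dist_eq, Real.coe_toNNReal _ (hC0 i)]
    exact hCq i hi u hu v hv
  have hWcont : ∀ i, i < N → ContinuousOn (W i) (Icc (x 0) (x N) ×ˢ (univ : Set ℝ)) := by
    intro i hi
    simp only [hWdef]
    apply ContinuousOn.prodMk
    · exact (Continuous.continuousOn (by unfold Lm; fun_prop))
    · apply ContinuousOn.add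
      · exact Continuous.continuousOn (by fun_prop)
      · exact ((hqLip i hi).continuousOn).comp continuous_fst.continuousOn
          (fun p hp => hp.1)
  have hWG : ∀ i, i < N → W i '' G ⊆ A := by
    intro i hi
    rintro p ⟨a, ⟨t, ht, rfl⟩, rfl⟩
    rcases eq_or_lt_of_le ht.2 with h | h
    · simp only [hWdef]
      rw [h]
      exact hlimpt i hi
    · simp only [hWdef]
      have : (Lm x N i t, α i * f t + q i t) = (Lm x N i t, f (Lm x N i t)) := by
        rw [hgraph i hi t ht.1 h]
      rw [this]
      exact subset_closure (mem_image_of_mem _ (hLm_mem i hi t ht.1 h.le))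
  have hWA : ∀ i, i < N → W i '' A ⊆ A := by
    intro i hi
    have h1 : W i '' closure G ⊆ closure (W i '' G) :=
      ContinuousOn.image_closure ((hWcont i hi).mono (by rw [← hAdef]; exact hAuniv))
    refine subset_trans h1 ?_
    calc closure (W i '' G) ⊆ closure A := closure_mono (hWG i hi)
      _ = A := closure_closure
  -- the invariance equation
  have hinv : A = ⋃ i ∈ Finset.range N, W i '' A := by
    have hclosed : IsClosed (⋃ i ∈ Finset.range N, W i '' A) := by
      apply isClosed_biUnion_finset
      intro i hi
      exact (hAcomp.image_of_continuousOn
        ((hWcont i (Finset.mem_range.mp hi)).mono hAuniv)).isClosed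
    apply Subset.antisymm
    · have hGsub2 : G ⊆ ⋃ i ∈ Finset.range N, W i '' A := by
        rintro p ⟨u, hu, rfl⟩
        rcases eq_or_lt_of_le hu.2 with h | h
        · refine mem_biUnion (Finset.mem_range.mpr hN1lt) ?_
          refine ⟨(u, f u), subset_closure (mem_image_of_mem _ hu), ?_⟩
          simp only [hWdef]
          rw [h]
          exact Prod.ext hLmNfix (by simp [← hfN])
        · set i := Nat.findGreatest (fun j => x j ≤ u) (N - 1) with hidef
          have hile : i ≤ N - 1 := Nat.findGreatest_le _
          have hxi : x i ≤ u := Nat.findGreatest_spec (P := fun j => x j ≤ u) (Nat.zero_le _) hu.1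
          have hui : u < x (i + 1) := by
            rcases eq_or_lt_of_le hile with he | hlt
            · rw [he, hN1]; exact h
            · by_contra hcon
              push_neg at hcon
              have := Nat.le_findGreatest (P := fun j => x j ≤ u) (by omega : i + 1 ≤ N - 1) hcon
              omega
          have hiN : i < N := by omega
          have hane : aC x N i ≠ 0 := ne_of_gt (ha_pos i hiN)
          refine mem_biUnion (Finset.mem_range.mpr hiN) ?_
          set s := LmInv x N i u with hsdef
          have hLms : Lm x N i s = u := by
            simp only [hsdef]
            unfold Lm LmInv
            field_simp
            ring
          have hs0 : x 0 ≤ s := by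
            have h1 : Lm x N i s - Lm x N i (x 0) = aC x N i * (s - x 0) := hLmd i s (x 0)
            rw [hLms, hLm0 i] at h1
            nlinarith [ha_pos i hiN]
          have hs1 : s < x N := by
            have h1 : Lm x N i (x N) - Lm x N i s = aC x N i * (x N - s) := hLmd i (x N) s
            rw [hLms, hLmN i] at h1
            nlinarith [ha_pos i hiN]
          refine ⟨(s, f s), subset_closure (mem_image_of_mem _ ⟨hs0, hs1.le⟩), ?_⟩
          simp only [hWdef]
          rw [← hgraph i hiN s hs0 hs1, hLms]
      calc A = closure G := rfl
        _ ⊆ closure (⋃ i ∈ Finset.range N, W i '' A) := closure_mono hGsub2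
        _ = ⋃ i ∈ Finset.range N, W i '' A := hclosed.closure_eq
    · intro p hp
      rw [mem_iUnion₂] at hp
      obtain ⟨i, hi, hpm⟩ := hp
      exact hWA i (Finset.mem_range.mp hi) hpm
    -- scaling constant for the conjugated metric
  set θ : ℝ := 1 + ∑ i ∈ Finset.range N, 2 * C i / (1 - |α i|) with hθdef
  have hterm : ∀ i ∈ Finset.range N, 0 ≤ 2 * C i / (1 - |α i|) := fun i hi =>
    div_nonneg (by linarith [hC0 i]) (by linarith [hα i (Finset.mem_range.mp hi)])
  have hθ1 : 1 ≤ θ := by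
    simp only [hθdef]
    linarith [Finset.sum_nonneg hterm]
  have hθ0 : 0 < θ := lt_of_lt_of_le one_pos hθ1
  have hθne : θ ≠ 0 := ne_of_gt hθ0
  have hθi : ∀ i, i < N → |α i| + C i / θ < 1 := by
    intro i hi
    have h2 : 0 < 1 - |α i| := by linarith [hα i hi]
    have h1 : 2 * C i / (1 - |α i|) ≤ θ - 1 := by
      simp only [hθdef]
      have := Finset.single_le_sum hterm (Finset.mem_range.mpr hi)
      linarith
    rw [div_le_iff₀ h2] at h1
    have h4 : C i / θ < 1 - |α i| := by
      rw [div_lt_iff₀ hθ0]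
      nlinarith [hC0 i]
    linarith
  -- the contraction ratio
  have hrange_ne : (Finset.range N).Nonempty := ⟨0, Finset.mem_range.mpr hNpos⟩
  set rr : ℝ := (Finset.range N).sup' hrange_ne
    (fun i => max (aC x N i) (|α i| + C i / θ)) with hrrdef
  have hrr_lt : rr < 1 := by
    simp only [hrrdef]
    rw [Finset.sup'_lt_iff]
    intro i hi
    exact max_lt (ha_lt i (Finset.mem_range.mp hi)) (hθi i (Finset.mem_range.mp hi))
  have hrr_ge : ∀ i, i < N → max (aC x N i) (|α i| + C i / θ) ≤ rr := by
    intro i hi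
    rw [hrrdef]
    exact Finset.le_sup' (fun j => max (aC x N j) (|α j| + C j / θ)) (Finset.mem_range.mpr hi)
  have hrr0 : 0 ≤ rr :=
    le_trans (le_trans (le_of_lt (ha_pos 0 hNpos)) (le_max_left _ _)) (hrr_ge 0 hNpos)
  set r : ℝ≥0 := rr.toNNReal with hrdef
  have hr1 : r < 1 := Real.toNNReal_lt_one.mpr hrr_lt
  have hrcoe : (r : ℝ) = rr := Real.coe_toNNReal _ hrr0
  -- the conjugating homeomorphism and conjugated maps
  set φ : ℝ × ℝ → ℝ × ℝ := fun p => (θ * p.1, p.2) with hφdef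
  set W' : ℕ → ℝ × ℝ → ℝ × ℝ :=
    fun i p => (aC x N i * p.1 + θ * bC x N i, α i * p.2 + q i (p.1 / θ)) with hW'def
  have hφcont : Continuous φ := by simp only [hφdef]; fun_prop
  have hφinj : Function.Injective φ := by
    intro p p' h
    simp only [hφdef, Prod.mk.injEq] at h
    exact Prod.ext (mul_left_cancel₀ hθne h.1) h.2
  have hconj : ∀ i p, W' i (φ p) = φ (W i p) := by
    intro i p
    simp only [hW'def, hφdef, hWdef, Prod.mk.injEq]
    constructor
    · unfold Lm; ring
    · rw [mul_div_cancel_left₀ _ hθne]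
  set D' : Set (ℝ × ℝ) := {p : ℝ × ℝ | p.1 / θ ∈ Icc (x 0) (x N)} with hD'def
  have hφD : ∀ p : ℝ × ℝ, p ∈ Icc (x 0) (x N) ×ˢ (univ : Set ℝ) → φ p ∈ D' := by
    intro p hp
    simp only [hD'def, hφdef, mem_setOf_eq]
    rw [mul_div_cancel_left₀ _ hθne]
    exact hp.1
  have hLip : ∀ i ∈ Finset.range N, LipschitzOnWith r (W' i) D' := by
    intro i hi'
    have hi := Finset.mem_range.mp hi'
    apply LipschitzOnWith.of_dist_le_mul
    intro p hp p' hp'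
    rw [hrcoe, Prod.dist_eq, max_le_iff]
    have e1 : |p.1 - p'.1| ≤ dist p p' := by
      rw [← Real.dist_eq]
      rw [Prod.dist_eq]
      exact le_max_left _ _
    have e2 : |p.2 - p'.2| ≤ dist p p' := by
      rw [← Real.dist_eq]
      rw [Prod.dist_eq]
      exact le_max_right _ _
    have e6 : (0:ℝ) ≤ dist p p' := dist_nonneg
    constructor
    · simp only [hW'def]
      rw [Real.dist_eq]
      have heq : (aC x N i * p.1 + θ * bC x N i) - (aC x N i * p'.1 + θ * bC x N i)
          = aC x N i * (p.1 - p'.1) := by ring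
      rw [heq, abs_mul, abs_of_pos (ha_pos i hi)]
      have e3 : aC x N i ≤ rr := le_trans (le_max_left _ _) (hrr_ge i hi)
      calc aC x N i * |p.1 - p'.1| ≤ rr * |p.1 - p'.1| :=
            mul_le_mul_of_nonneg_right e3 (abs_nonneg _)
        _ ≤ rr * dist p p' := mul_le_mul_of_nonneg_left e1 hrr0
    · simp only [hW'def]
      rw [Real.dist_eq]
      have heq : (α i * p.2 + q i (p.1 / θ)) - (α i * p'.2 + q i (p'.1 / θ))
          = α i * (p.2 - p'.2) + (q i (p.1 / θ) - q i (p'.1 / θ)) := by ring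
      rw [heq]
      have h1 : |q i (p.1 / θ) - q i (p'.1 / θ)| ≤ C i * |p.1 / θ - p'.1 / θ| :=
        hCq i hi _ hp _ hp'
      have h2 : |p.1 / θ - p'.1 / θ| = |p.1 - p'.1| / θ := by
        rw [div_sub_div_same, abs_div, abs_of_pos hθ0]
      rw [h2] at h1
      have e3 : |α i| + C i / θ ≤ rr := le_trans (le_max_right _ _) (hrr_ge i hi)
      have e4 : (0:ℝ) ≤ |α i| := abs_nonneg _
      have e5 : (0:ℝ) ≤ C i / θ := div_nonneg (hC0 i) hθ0.le
      calc |α i * (p.2 - p'.2) + (q i (p.1 / θ) - q i (p'.1 / θ))|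
          ≤ |α i * (p.2 - p'.2)| + |q i (p.1 / θ) - q i (p'.1 / θ)| := abs_add_le _ _
        _ ≤ |α i| * |p.2 - p'.2| + C i / θ * |p.1 - p'.1| := by
            rw [abs_mul]
            refine add_le_add le_rfl (h1.trans (le_of_eq ?_))
            ring
        _ ≤ (|α i| + C i / θ) * dist p p' := by nlinarith
        _ ≤ rr * dist p p' := mul_le_mul_of_nonneg_right e3 e6
  have himg : ∀ S : Set (ℝ × ℝ), φ '' (⋃ i ∈ Finset.range N, W i '' S)
      = ⋃ i ∈ Finset.range N, W' i '' (φ '' S) := by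
    intro S
    rw [image_iUnion₂]
    apply iUnion₂_congr
    intro i hi
    rw [image_image, image_image]
    exact image_congr (fun p _ => (hconj i p).symm)
  have hsat : ∀ S : Set (ℝ × ℝ), S.Nonempty → IsCompact S →
      S ⊆ Icc (x 0) (x N) ×ˢ (univ : Set ℝ) →
      S = ⋃ i ∈ Finset.range N, W i '' S →
      (φ '' S).Nonempty ∧ IsCompact (φ '' S) ∧ φ '' S ⊆ D' ∧
        φ '' S = ⋃ i ∈ Finset.range N, W' i '' (φ '' S) := by
    intro S hne hc hsub heq
    refine ⟨hne.image _, hc.image hφcont, ?_, ?_⟩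
    · rintro p ⟨a, ha, rfl⟩
      exact hφD a (hsub ha)
    · conv_lhs => rw [heq]
      exact himg S
  refine ⟨A, hAdef, hAne, hAcomp, hAuniv, hinv, ?_⟩
  intro B hBne hBc hBsub hBeq
  obtain ⟨h1, h2, h3, h4⟩ := hsat B hBne hBc hBsub hBeq
  obtain ⟨g1, g2, g3, g4⟩ := hsat A hAne hAcomp hAuniv hinv
  have hBA := attractor_unique (Finset.range N) W' D' r hr1 hLip h1 h2 h3 h4 g1 g2 g3 g4
  exact Set.image_injective.mpr hφinj hBA
end

section
/- Assume each q_i is Lipschitz continuous. Then the set of points of I at which the bounded fractal function f is discontinuous has Lebesgue measure zero; in particular f is Riemann integrable on I. -/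
open Set

private lemma frac_aux (ρ C M η P : ℝ) (hρ0 : 0 ≤ ρ) (hρ1 : ρ < 1) (hC0 : 0 ≤ C)
    (hM0 : 0 ≤ M) (hη : 0 < η) (hP : 0 ≤ P) :
    ρ * (2 * M * P + η / 2) + C * (η / (2 * (C + 1))) ≤ 2 * M * (P * ρ) + η := by
  have h1 : ρ * (η / 2) ≤ η / 2 := by nlinarith
  have h2 : C * (η / (2 * (C + 1))) ≤ η / 2 := by
    have he : C * (η / (2 * (C + 1))) = (C * η) / (2 * (C + 1)) := by ring
    rw [he, div_le_iff₀ (by positivity)]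
    nlinarith
  nlinarith

/-- The set of points of discontinuity of the bounded fractal function has Lebesgue measure
zero; in particular `f` is (Riemann, hence interval) integrable on `I`. -/
theorem stmt11
    (N : ℕ) (hN : 2 ≤ N)
    (x : ℕ → ℝ)
    (hx : ∀ i, i < N → x i < x (i + 1))
    (α : ℕ → ℝ) (hα : ∀ i, i < N → |α i| < 1)
    (q : ℕ → ℝ → ℝ)
    (hq : ∀ i, i < N → ∃ C, ∀ u ∈ Icc (x 0) (x N), ∀ v ∈ Icc (x 0) (x N),
      |q i u - q i v| ≤ C * |u - v|)
    (f : ℝ → ℝ)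
    (hfb : ∃ M, ∀ t ∈ Icc (x 0) (x N), |f t| ≤ M)
    (hfe : ∀ i, i < N → ∀ t ∈ Ico (x 0) (x N), f (Lm x N i t) = α i * f t + q i t)
    (hfeN : f (Lm x N (N - 1) (x N)) = α (N - 1) * f (x N) + q (N - 1) (x N)) :
    MeasureTheory.volume
        {t : ℝ | t ∈ Icc (x 0) (x N) ∧ ¬ ContinuousWithinAt f (Icc (x 0) (x N)) t} = 0 ∧
    IntervalIntegrable f MeasureTheory.volume (x 0) (x N) := by
  -- monotonicity of the partition points
  have hmono : ∀ i j : ℕ, i ≤ j → j ≤ N → x i ≤ x j := by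
    intro i j hij hjN
    induction j with
    | zero => simp_all
    | succ n ih =>
      rcases Nat.eq_or_lt_of_le hij with h | h
      · rw [h]
      · exact le_trans (ih (Nat.lt_succ_iff.mp h) (by omega))
          (le_of_lt (hx n (by omega)))
  have hxN : x 0 < x N :=
    lt_of_lt_of_le (hx 0 (by omega)) (hmono 1 N (by omega) le_rfl)
  have hd : (0:ℝ) < x N - x 0 := sub_pos.2 hxN
  have hdne : x N - x 0 ≠ 0 := ne_of_gt hd
  have ha : ∀ i, i < N → 0 < aC x N i := fun i hi =>
    div_pos (sub_pos.2 (hx i hi)) hd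
  have hL0 : ∀ i, i < N → Lm x N i (x 0) = x i := by
    intro i hi
    unfold Lm aC bC
    field_simp
    ring
  have hL1 : ∀ i, i < N → Lm x N i (x N) = x (i + 1) := by
    intro i hi
    unfold Lm aC bC
    field_simp
    ring
  have hLmono : ∀ i, i < N → ∀ u v : ℝ, u ≤ v → Lm x N i u ≤ Lm x N i v := by
    intro i hi u v huv
    unfold Lm
    have := ha i hi
    nlinarith
  -- covering lemma
  have hcover : ∀ t, x 0 ≤ t → t < x N → ∃ i, i < N ∧ x i ≤ t ∧ t < x (i+1) := by
    intro t h0 h1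
    have key : ∀ n, n ≤ N → t < x n → ∃ i, i < n ∧ x i ≤ t ∧ t < x (i+1) := by
      intro n
      induction n with
      | zero => intro _ h; exact absurd h (not_lt.2 h0)
      | succ m ih =>
        intro hmN h
        by_cases hm : t < x m
        · obtain ⟨i, hi, h2, h3⟩ := ih (by omega) hm
          exact ⟨i, by omega, h2, h3⟩
        · exact ⟨m, by omega, not_lt.1 hm, h⟩
    exact key N le_rfl h1
  obtain ⟨M, hM⟩ := hfb
  have hM0 : 0 ≤ M := le_trans (abs_nonneg _) (hM (x 0) ⟨le_rfl, le_of_lt hxN⟩)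
  have hNne : (Finset.range N).Nonempty := Finset.nonempty_range_iff.2 (by omega)
  set ρ := (Finset.range N).sup' hNne (fun i => |α i|) with hρdef
  have hρlt : ρ < 1 := (Finset.sup'_lt_iff hNne).2 (fun i hi => hα i (Finset.mem_range.1 hi))
  have hρge : ∀ i, i < N → |α i| ≤ ρ := fun i hi =>
    Finset.le_sup' (fun j => |α j|) (Finset.mem_range.2 hi)
  have hρ0 : (0:ℝ) ≤ ρ := le_trans (abs_nonneg (α 0)) (hρge 0 (by omega))
  -- uniform Lipschitz constant
  have hqC : ∃ C : ℝ, 0 ≤ C ∧ ∀ i, i < N → ∀ u ∈ Icc (x 0) (x N), ∀ v ∈ Icc (x 0) (x N),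
      |q i u - q i v| ≤ C * |u - v| := by
    choose Cf hCf using hq
    refine ⟨max 0 ((Finset.range N).sup' hNne
      (fun i => if h : i < N then Cf i h else 0)), le_max_left _ _, ?_⟩
    intro i hi u hu v hv
    calc |q i u - q i v| ≤ Cf i hi * |u - v| := hCf i hi u hu v hv
      _ ≤ _ := by
        apply mul_le_mul_of_nonneg_right _ (abs_nonneg _)
        refine le_trans ?_ (le_max_right _ _)
        have := Finset.le_sup' (fun j => if h : j < N then Cf j h else 0)
          (Finset.mem_range.2 hi)
        exact le_trans (le_of_eq (by simp [hi])) this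
  obtain ⟨C, hC0, hC⟩ := hqC
  -- main inductive claim
  have claim : ∀ k : ℕ, ∃ B : Set ℝ, B.Countable ∧ ∀ t, t ∈ Ioo (x 0) (x N) → t ∉ B →
      ∀ η : ℝ, 0 < η → ∃ δ, 0 < δ ∧ ∀ t', |t' - t| < δ →
        t' ∈ Ioo (x 0) (x N) ∧ |f t' - f t| ≤ 2 * M * ρ ^ k + η := by
    intro k
    induction k with
    | zero =>
      refine ⟨∅, countable_empty, ?_⟩
      intro t ht _ η hη
      refine ⟨min (t - x 0) (x N - t), lt_min (sub_pos.2 ht.1) (sub_pos.2 ht.2), ?_⟩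
      intro t' h
      have h1 : |t' - t| < t - x 0 := lt_of_lt_of_le h (min_le_left _ _)
      have h2 : |t' - t| < x N - t := lt_of_lt_of_le h (min_le_right _ _)
      have h1' := abs_lt.1 h1
      have h2' := abs_lt.1 h2
      have ht' : t' ∈ Ioo (x 0) (x N) := ⟨by linarith [h1'.1], by linarith [h2'.2]⟩
      refine ⟨ht', ?_⟩
      have hb1 := hM t' ⟨le_of_lt ht'.1, le_of_lt ht'.2⟩
      have hb2 := hM t ⟨le_of_lt ht.1, le_of_lt ht.2⟩
      have : |f t' - f t| ≤ |f t'| + |f t| := abs_sub _ _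
      simp only [pow_zero]
      linarith
    | succ k ih =>
      obtain ⟨B, hBc, hB⟩ := ih
      refine ⟨Set.range x ∪ ⋃ i ∈ Finset.range N, (Lm x N i) '' B,
        (countable_range x).union (Set.Countable.biUnion (Finset.countable_toSet _)
          (fun i _ => hBc.image _)), ?_⟩
      intro t ht htB η hη
      obtain ⟨i, hiN, hit1, hit2⟩ := hcover t (le_of_lt ht.1) ht.2
      have hti : x i < t := lt_of_le_of_ne hit1 (by
        intro h
        exact htB (Or.inl ⟨i, h⟩))
      have hai : 0 < aC x N i := ha i hiN
      set s := (t - bC x N i) / aC x N i with hs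
      have hLs : Lm x N i s = t := by
        rw [hs]; unfold Lm; field_simp; ring
      have hs0 : x 0 < s := by
        by_contra hc
        push_neg at hc
        have h2 := hLmono i hiN s (x 0) hc
        rw [hLs, hL0 i hiN] at h2
        exact absurd hti (not_lt.2 h2)
      have hsN : s < x N := by
        by_contra hc
        push_neg at hc
        have h2 := hLmono i hiN (x N) s hc
        rw [hLs, hL1 i hiN] at h2
        exact absurd hit2 (not_lt.2 h2)
      have hsB : s ∉ B := by
        intro hb
        refine htB (Or.inr ?_)
        exact Set.mem_biUnion (Finset.mem_range.2 hiN) ⟨s, hb, hLs⟩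
      obtain ⟨δ₀, hδ₀, hprop⟩ := hB s ⟨hs0, hsN⟩ hsB (η/2) (by linarith)
      refine ⟨min (aC x N i * δ₀) (min (aC x N i * (η / (2*(C+1))))
        (min (t - x i) (x (i+1) - t))), ?_, ?_⟩
      · refine lt_min (by positivity) (lt_min (by positivity)
          (lt_min (by linarith) (by linarith)))
      intro t' hdist
      have hd1 : |t' - t| < aC x N i * δ₀ := lt_of_lt_of_le hdist (min_le_left _ _)
      have hd2 : |t' - t| < aC x N i * (η / (2*(C+1))) :=
        lt_of_lt_of_le hdist (le_trans (min_le_right _ _) (min_le_left _ _))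
      have hd3 : |t' - t| < t - x i :=
        lt_of_lt_of_le hdist (le_trans (min_le_right _ _)
          (le_trans (min_le_right _ _) (min_le_left _ _)))
      have hd4 : |t' - t| < x (i+1) - t :=
        lt_of_lt_of_le hdist (le_trans (min_le_right _ _)
          (le_trans (min_le_right _ _) (min_le_right _ _)))
      have hd3' := abs_lt.1 hd3
      have hd4' := abs_lt.1 hd4
      have hti'1 : x i < t' := by linarith [hd3'.1]
      have hti'2 : t' < x (i+1) := by linarith [hd4'.2]
      have ht'I : t' ∈ Ioo (x 0) (x N) :=
        ⟨lt_of_le_of_lt (hmono 0 i (by omega) (by omega)) hti'1,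
         lt_of_lt_of_le hti'2 (hmono (i+1) N (by omega) le_rfl)⟩
      set s' := (t' - bC x N i) / aC x N i with hs'
      have hLs' : Lm x N i s' = t' := by
        rw [hs']; unfold Lm; field_simp; ring
      have hs'0 : x 0 < s' := by
        by_contra hc
        push_neg at hc
        have h2 := hLmono i hiN s' (x 0) hc
        rw [hLs', hL0 i hiN] at h2
        exact absurd hti'1 (not_lt.2 h2)
      have hs'N : s' < x N := by
        by_contra hc
        push_neg at hc
        have h2 := hLmono i hiN (x N) s' hc
        rw [hLs', hL1 i hiN] at h2
        exact absurd hti'2 (not_lt.2 h2)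
      have hss' : |s' - s| = |t' - t| / aC x N i := by
        rw [hs', hs, div_sub_div_same, abs_div, abs_of_pos hai]
        congr 1
        ring
      have h1 : |s' - s| < δ₀ := by
        rw [hss', div_lt_iff₀ hai]
        linarith [hd1]
      have hss2 : |s' - s| < η / (2*(C+1)) := by
        rw [hss', div_lt_iff₀ hai]
        linarith [hd2]
      obtain ⟨_, hfs⟩ := hprop s' h1
      have heq1 : f t = α i * f s + q i s := by
        rw [← hLs]; exact hfe i hiN s ⟨le_of_lt hs0, hsN⟩
      have heq2 : f t' = α i * f s' + q i s' := by
        rw [← hLs']; exact hfe i hiN s' ⟨le_of_lt hs'0, hs'N⟩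
      have hq' : |q i s' - q i s| ≤ C * |s' - s| :=
        hC i hiN s' ⟨le_of_lt hs'0, le_of_lt hs'N⟩ s ⟨le_of_lt hs0, le_of_lt hsN⟩
      refine ⟨ht'I, ?_⟩
      have key : |f t' - f t| ≤ |α i| * |f s' - f s| + |q i s' - q i s| := by
        rw [heq1, heq2]
        calc |α i * f s' + q i s' - (α i * f s + q i s)|
            = |α i * (f s' - f s) + (q i s' - q i s)| := by ring_nf
          _ ≤ |α i * (f s' - f s)| + |q i s' - q i s| := abs_add_le _ _
          _ = |α i| * |f s' - f s| + |q i s' - q i s| := by rw [abs_mul]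
      have hαρ := hρge i hiN
      have habs0 : (0:ℝ) ≤ |f s' - f s| := abs_nonneg _
      have habs1 : (0:ℝ) ≤ |α i| := abs_nonneg _
      have hpow : (0:ℝ) ≤ ρ ^ k := pow_nonneg hρ0 k
      have hstep1 : |α i| * |f s' - f s| ≤ ρ * (2 * M * ρ ^ k + η/2) := by
        apply mul_le_mul hαρ hfs habs0 hρ0
      have hstep2 : |q i s' - q i s| ≤ C * (η / (2*(C+1))) :=
        le_trans hq' (mul_le_mul_of_nonneg_left (le_of_lt hss2) hC0)
      have hfinal : ρ * (2 * M * ρ ^ k + η/2) + C * (η / (2*(C+1)))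
          ≤ 2 * M * ρ ^ (k+1) + η := by
        rw [pow_succ]
        exact frac_aux ρ C M η (ρ ^ k) hρ0 hρlt hC0 hM0 hη hpow
      linarith [key, hstep1, hstep2, hfinal]
  choose Bs hBsc hBs using claim
  set B : Set ℝ := {x 0, x N} ∪ ⋃ k, Bs k with hBdef
  have hBc : B.Countable :=
    (Set.countable_insert.2 (countable_singleton _)).union (countable_iUnion hBsc)
  have hBnull : MeasureTheory.volume B = 0 := hBc.measure_zero _
  have hcont : ∀ t ∈ Icc (x 0) (x N), t ∉ B → ContinuousAt f t := by
    intro t htI htB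
    have ht0 : t ≠ x 0 := fun h => htB (Or.inl (Or.inl h))
    have htN : t ≠ x N := fun h => htB (Or.inl (Or.inr h))
    have htO : t ∈ Ioo (x 0) (x N) :=
      ⟨lt_of_le_of_ne htI.1 (Ne.symm ht0), lt_of_le_of_ne htI.2 htN⟩
    rw [Metric.continuousAt_iff]
    intro ε hε
    obtain ⟨k, hk⟩ := exists_pow_lt_of_lt_one
      (show (0:ℝ) < ε/(2*(2*M+1)) by positivity) hρlt
    obtain ⟨δ, hδ, hp⟩ := hBs k t htO
      (fun h => htB (Or.inr (mem_iUnion.2 ⟨k, h⟩))) (ε/4) (by linarith)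
    refine ⟨δ, hδ, ?_⟩
    intro s hsd
    rw [Real.dist_eq] at hsd ⊢
    have hb := (hp s hsd).2
    have hpow : (0:ℝ) ≤ ρ ^ k := pow_nonneg hρ0 k
    have h2 : 2 * M * ρ ^ k < ε/2 := by
      have hm := mul_lt_mul_of_pos_left hk (show (0:ℝ) < 2*M+1 by linarith)
      have heq : (2*M+1) * (ε/(2*(2*M+1))) = ε/2 := by
        field_simp
      rw [heq] at hm
      nlinarith
    linarith
  constructor
  · refine MeasureTheory.measure_mono_null (fun t ht => ?_) hBnull
    by_contra htB
    exact ht.2 (hcont t ht.1 htB).continuousWithinAt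
  · have hms : MeasurableSet (Icc (x 0) (x N) \ B) :=
      measurableSet_Icc.diff hBc.measurableSet
    have hcOn : ContinuousOn f (Icc (x 0) (x N) \ B) := fun t ht =>
      (hcont t ht.1 ht.2).continuousWithinAt
    have haem : MeasureTheory.AEStronglyMeasurable f
        (MeasureTheory.volume.restrict (Ioc (x 0) (x N) \ B)) :=
      ((hcOn.aemeasurable hms).mono_measure
        (MeasureTheory.Measure.restrict_mono
          (diff_subset_diff_left Ioc_subset_Icc_self) le_rfl)).aestronglyMeasurable
    have h1 : MeasureTheory.IntegrableOn f (Ioc (x 0) (x N) \ B) MeasureTheory.volume := by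
      have hfin : MeasureTheory.volume (Ioc (x 0) (x N) \ B) < ⊤ :=
        lt_of_le_of_lt (MeasureTheory.measure_mono diff_subset)
          (by rw [Real.volume_Ioc]; exact ENNReal.ofReal_lt_top)
      have hcst : MeasureTheory.IntegrableOn (fun _ : ℝ => M) (Ioc (x 0) (x N) \ B)
          MeasureTheory.volume := MeasureTheory.integrableOn_const hfin.ne
      refine MeasureTheory.Integrable.mono' hcst haem ?_
      rw [MeasureTheory.ae_restrict_iff' (measurableSet_Ioc.diff hBc.measurableSet)]
      refine MeasureTheory.ae_of_all _ (fun y hy => ?_)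
      rw [Real.norm_eq_abs]
      exact hM y (Ioc_subset_Icc_self hy.1)
    have h2 : MeasureTheory.IntegrableOn f (Ioc (x 0) (x N)) MeasureTheory.volume := by
      refine MeasureTheory.IntegrableOn.congr_set_ae h1 ?_
      exact ((MeasureTheory.diff_ae_eq_self).2
        (MeasureTheory.measure_mono_null inter_subset_right hBnull)).symm
    exact (intervalIntegrable_iff_integrableOn_Ioc_of_le (le_of_lt hxN)).2 h2
end

section
/- Assume each q_i is Lipschitz continuous and let f be the bounded fractal function. Then ∫_{x_0}^{x_N} f(x) dx = (∑_{i=1}^N a_i ∫_{x_0}^{x_N} q_i(x) dx) / (1 − ∑_{i=1}^N a_i α_i); the denominator is nonzero since ∑_{i=1}^N a_i = 1, a_i > 0 and |α_i| < 1 imply ∑_{i=1}^N a_i α_i < 1. -/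
open Set MeasureTheory Filter

/-- Inverse of the affine map. -/
noncomputable def invL (x : ℕ → ℝ) (N i : ℕ) (s : ℝ) : ℝ := (s - bC x N i) / aC x N i

/-- One step of the fractal operator (using clamped `q`). -/
noncomputable def Tmap (x : ℕ → ℝ) (N : ℕ) (α : ℕ → ℝ) (q' : ℕ → ℝ → ℝ) (g : ℝ → ℝ) : ℝ → ℝ :=
  fun s => ∑ i ∈ Finset.range N,
    (Set.Ico (x i) (x (i + 1))).indicator
      (fun u => α i * g (invL x N i u) + q' i (invL x N i u)) s

/-- Iterates of the fractal operator starting from 0. -/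
noncomputable def gseq (x : ℕ → ℝ) (N : ℕ) (α : ℕ → ℝ) (q' : ℕ → ℝ → ℝ) : ℕ → ℝ → ℝ
  | 0 => fun _ => 0
  | n + 1 => Tmap x N α q' (gseq x N α q' n)

/-- The integral of the bounded fractal function:
`∫ f = (∑ a i ∫ q i) / (1 - ∑ a i α i)`, where `∑ a i α i < 1`. -/
theorem stmt12
    (N : ℕ) (hN : 2 ≤ N)
    (x : ℕ → ℝ)
    (hx : ∀ i, i < N → x i < x (i + 1))
    (α : ℕ → ℝ) (hα : ∀ i, i < N → |α i| < 1)
    (q : ℕ → ℝ → ℝ)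
    (hq : ∀ i, i < N → ∃ C, ∀ u ∈ Icc (x 0) (x N), ∀ v ∈ Icc (x 0) (x N),
      |q i u - q i v| ≤ C * |u - v|)
    (f : ℝ → ℝ)
    (hfb : ∃ M, ∀ t ∈ Icc (x 0) (x N), |f t| ≤ M)
    (hfe : ∀ i, i < N → ∀ t ∈ Ico (x 0) (x N), f (Lm x N i t) = α i * f t + q i t)
    (hfeN : f (Lm x N (N - 1) (x N)) = α (N - 1) * f (x N) + q (N - 1) (x N)) :
    (∑ i ∈ Finset.range N, aC x N i * α i) < 1 ∧
    ∫ t in (x 0)..(x N), f t =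
      (∑ i ∈ Finset.range N, aC x N i * ∫ t in (x 0)..(x N), q i t) /
        (1 - ∑ i ∈ Finset.range N, aC x N i * α i) := by
  classical
  -- monotonicity of the nodes
  have hmono : ∀ j, j ≤ N → ∀ i, i ≤ j → x i ≤ x j := by
    intro j
    induction j with
    | zero => intro _ i hi; have : i = 0 := Nat.le_zero.mp hi; simp [this]
    | succ n ih =>
      intro hn i hi
      by_cases h : i = n + 1
      · simp [h]
      · have hi' : i ≤ n := by omega
        exact le_trans (ih (by omega) i hi') (le_of_lt (hx n (by omega)))
  have h0N : x 0 < x N := by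
    have h1 : x 0 ≤ x (N - 1) := hmono (N - 1) (by omega) 0 (by omega)
    have h2 : x (N - 1) < x (N - 1 + 1) := hx (N - 1) (by omega)
    have h3 : N - 1 + 1 = N := by omega
    rw [h3] at h2
    exact lt_of_le_of_lt h1 h2
  have hdpos : (0:ℝ) < x N - x 0 := sub_pos.mpr h0N
  have hden : x N - x 0 ≠ 0 := ne_of_gt hdpos
  have hapos : ∀ i, i < N → 0 < aC x N i := fun i hi =>
    div_pos (sub_pos.mpr (hx i hi)) hdpos
  have hL0 : ∀ i, aC x N i * x 0 + bC x N i = x i := by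
    intro i; unfold aC bC; field_simp; ring
  have hLN : ∀ i, aC x N i * x N + bC x N i = x (i + 1) := by
    intro i; unfold aC bC; field_simp; ring
  have hLinv : ∀ i, i < N → ∀ s, aC x N i * invL x N i s + bC x N i = s := by
    intro i hi s; unfold invL
    have ha : aC x N i ≠ 0 := ne_of_gt (hapos i hi)
    field_simp
    ring
  have hinvmem : ∀ i, i < N → ∀ s ∈ Ico (x i) (x (i + 1)), invL x N i s ∈ Ico (x 0) (x N) := by
    intro i hi s hs
    have ha := hapos i hi
    have h1 := hLinv i hi s
    constructor
    · have h2 : aC x N i * x 0 ≤ aC x N i * invL x N i s := by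
        have := hL0 i; linarith [hs.1]
      exact le_of_mul_le_mul_left h2 ha
    · have h2 : aC x N i * invL x N i s < aC x N i * x N := by
        have := hLN i; linarith [hs.2]
      exact lt_of_mul_lt_mul_left h2 ha.le
  -- partition
  have hpart : ∀ s ∈ Ico (x 0) (x N), ∃ i, i < N ∧ x i ≤ s ∧ s < x (i + 1) := by
    intro s hs
    set P : ℕ → Prop := fun j => x j ≤ s with hP
    have hspec : P (Nat.findGreatest P (N - 1)) :=
      Nat.findGreatest_spec (Nat.zero_le (N - 1)) hs.1
    have hiN : Nat.findGreatest P (N - 1) ≤ N - 1 := Nat.findGreatest_le _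
    refine ⟨Nat.findGreatest P (N - 1), by omega, hspec, ?_⟩
    by_cases hcase : Nat.findGreatest P (N - 1) = N - 1
    · rw [show Nat.findGreatest P (N - 1) + 1 = N by omega]
      exact hs.2
    · have h4 : ¬ P (Nat.findGreatest P (N - 1) + 1) :=
        Nat.findGreatest_is_greatest (Nat.lt_succ_self _) (by omega)
      exact lt_of_not_ge h4
  have hdisj : ∀ i j, i < N → j < N → i ≠ j → ∀ s, x i ≤ s → s < x (i + 1) →
      s ∉ Ico (x j) (x (j + 1)) := by
    intro i j hi hj hne s h1 h2 hsj
    rcases Nat.lt_or_ge i j with h | h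
    · have : x (i + 1) ≤ x j := hmono j (by omega) (i + 1) (by omega)
      linarith [hsj.1]
    · have hji : j < i := lt_of_le_of_ne h (Ne.symm hne)
      have : x (j + 1) ≤ x i := hmono i (by omega) (j + 1) (by omega)
      linarith [hsj.2]
  -- the bound M
  obtain ⟨M0, hM0⟩ := hfb
  set M := max M0 0 with hMdef
  have hM : ∀ t ∈ Icc (x 0) (x N), |f t| ≤ M := fun t ht =>
    le_trans (hM0 t ht) (le_max_left _ _)
  have hMnn : (0:ℝ) ≤ M := le_max_right _ _
  -- the contraction constant
  have hNne : (Finset.range N).Nonempty := ⟨0, Finset.mem_range.mpr (by omega)⟩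
  set c := (Finset.range N).sup' hNne (fun i => |α i|) with hcdef
  have hc1 : c < 1 := (Finset.sup'_lt_iff hNne).mpr
    (fun i hi => hα i (Finset.mem_range.mp hi))
  have hcle : ∀ i, i < N → |α i| ≤ c := fun i hi =>
    Finset.le_sup' (fun j => |α j|) (Finset.mem_range.mpr hi)
  have hc0 : (0:ℝ) ≤ c := le_trans (abs_nonneg (α 0)) (hcle 0 (by omega))
  -- the clamped q
  set q' : ℕ → ℝ → ℝ := fun i s => q i (max (min s (x N)) (x 0)) with hq'def
  have hqcont : ∀ i, i < N → ContinuousOn (q i) (Icc (x 0) (x N)) := by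
    intro i hi
    obtain ⟨C, hC⟩ := hq i hi
    have hlip : LipschitzOnWith (Real.toNNReal C) (q i) (Icc (x 0) (x N)) := by
      apply LipschitzOnWith.of_dist_le_mul
      intro u hu v hv
      rw [Real.dist_eq, Real.dist_eq]
      calc |q i u - q i v| ≤ C * |u - v| := hC u hu v hv
        _ ≤ (Real.toNNReal C : ℝ) * |u - v| :=
          mul_le_mul_of_nonneg_right (Real.le_coe_toNNReal C) (abs_nonneg _)
    exact hlip.continuousOn
  have hq'cont : ∀ i, i < N → Continuous (q' i) := by
    intro i hi
    apply (hqcont i hi).comp_continuous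
    · exact (continuous_id.min continuous_const).max continuous_const
    · intro s
      exact ⟨le_max_right _ _, max_le (min_le_right _ _) h0N.le⟩
  have hq'eq : ∀ i, ∀ t ∈ Icc (x 0) (x N), q' i t = q i t := by
    intro i t ht
    simp only [hq'def]
    rw [min_eq_left ht.2, max_eq_left ht.1]
  -- measurability of the iterates
  have hinvmeas : ∀ i, Measurable (invL x N i) := by
    intro i
    unfold invL
    exact (measurable_id.sub measurable_const).div measurable_const
  have hgmeas : ∀ n, Measurable (gseq x N α q' n) := by
    intro n
    induction n with
    | zero => exact measurable_const
    | succ n ih =>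
      show Measurable (Tmap x N α q' (gseq x N α q' n))
      unfold Tmap
      apply Finset.measurable_sum
      intro i hi
      apply Measurable.indicator _ measurableSet_Ico
      exact (measurable_const.mul (ih.comp (hinvmeas i))).add
        ((hq'cont i (Finset.mem_range.mp hi)).measurable.comp (hinvmeas i))
  have geval : ∀ n i, i < N → ∀ s ∈ Ico (x i) (x (i + 1)),
      gseq x N α q' (n + 1) s
        = α i * gseq x N α q' n (invL x N i s) + q' i (invL x N i s) := by
    intro n i hi s hs
    show Tmap x N α q' (gseq x N α q' n) s = _
    unfold Tmap
    rw [Finset.sum_eq_single i]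
    · exact Set.indicator_of_mem hs _
    · intro j hj hne
      exact Set.indicator_of_notMem
        (hdisj i j hi (Finset.mem_range.mp hj) (Ne.symm hne) s hs.1 hs.2) _
    · intro h; exact absurd (Finset.mem_range.mpr hi) h
  -- the contraction bound
  have hbound : ∀ n, ∀ s ∈ Ico (x 0) (x N),
      |f s - gseq x N α q' n s| ≤ c ^ n * M := by
    intro n
    induction n with
    | zero =>
      intro s hs
      have : gseq x N α q' 0 s = 0 := rfl
      rw [this, sub_zero, pow_zero, one_mul]
      exact hM s (Ico_subset_Icc_self hs)
    | succ n ih =>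
      intro s hs
      obtain ⟨i, hi, h1, h2⟩ := hpart s hs
      have hsmem : s ∈ Ico (x i) (x (i + 1)) := ⟨h1, h2⟩
      have ht := hinvmem i hi s hsmem
      set t := invL x N i s with htdef
      have hfs : f s = α i * f t + q i t := by
        have hLs : Lm x N i t = s := hLinv i hi s
        rw [← hLs]
        exact hfe i hi t ht
      have hgs : gseq x N α q' (n + 1) s = α i * gseq x N α q' n t + q i t := by
        rw [geval n i hi s hsmem, hq'eq i t (Ico_subset_Icc_self ht)]
      rw [hfs, hgs]
      have heq : (α i * f t + q i t) - (α i * gseq x N α q' n t + q i t)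
          = α i * (f t - gseq x N α q' n t) := by ring
      rw [heq, abs_mul]
      have hstep : |α i| * |f t - gseq x N α q' n t| ≤ c * (c ^ n * M) :=
        mul_le_mul (hcle i hi) (ih t ht) (abs_nonneg _) hc0
      have : c * (c ^ n * M) = c ^ (n + 1) * M := by ring
      linarith
  -- pointwise convergence
  have htend : ∀ s ∈ Ico (x 0) (x N),
      Tendsto (fun n => gseq x N α q' n s) atTop (nhds (f s)) := by
    intro s hs
    rw [tendsto_iff_dist_tendsto_zero]
    have h0 : Tendsto (fun n => c ^ n * M) atTop (nhds 0) := by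
      simpa using (tendsto_pow_atTop_nhds_zero_of_lt_one hc0 hc1).mul_const M
    apply squeeze_zero (fun n => dist_nonneg) (fun n => ?_) h0
    rw [Real.dist_eq, abs_sub_comm]
    exact hbound n s hs
  -- integrability of f
  have haem : AEStronglyMeasurable f (volume.restrict (Ioc (x 0) (x N))) := by
    have h1 : ∀ᵐ s ∂(volume.restrict (Ioc (x 0) (x N))), s ∈ Ioc (x 0) (x N) :=
      ae_restrict_mem measurableSet_Ioc
    have h2 : ∀ᵐ s ∂(volume.restrict (Ioc (x 0) (x N))), s ∉ ({x N} : Set ℝ) :=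
      ae_restrict_of_ae (measure_eq_zero_iff_ae_notMem.mp (measure_singleton _))
    have hae : ∀ᵐ s ∂(volume.restrict (Ioc (x 0) (x N))),
        Tendsto (fun n => gseq x N α q' n s) atTop (nhds (f s)) := by
      filter_upwards [h1, h2] with s hsm hne
      exact htend s ⟨hsm.1.le, lt_of_le_of_ne hsm.2 (by simpa using hne)⟩
    exact (aemeasurable_of_tendsto_metrizable_ae atTop
      (fun n => (hgmeas n).aemeasurable) hae).aestronglyMeasurable
  have hfint : IntervalIntegrable f volume (x 0) (x N) := by
    rw [intervalIntegrable_iff_integrableOn_Ioc_of_le h0N.le]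
    refine ⟨haem, ?_⟩
    apply HasFiniteIntegral.restrict_of_bounded (C := M) measure_Ioc_lt_top
    filter_upwards [ae_restrict_mem measurableSet_Ioc] with s hs
    rw [Real.norm_eq_abs]
    exact hM s (Ioc_subset_Icc_self hs)
  have hqint : ∀ i, i < N → IntervalIntegrable (q i) volume (x 0) (x N) := by
    intro i hi
    apply ContinuousOn.intervalIntegrable
    rw [uIcc_of_le h0N.le]
    exact hqcont i hi
  have hfint' : ∀ k, k < N → IntervalIntegrable f volume (x k) (x (k + 1)) := by
    intro k hk
    apply hfint.mono_set
    rw [uIcc_of_le h0N.le, uIcc_of_le (hx k hk).le]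
    exact Icc_subset_Icc (hmono k (by omega) 0 (by omega))
      (hmono N le_rfl (k + 1) (by omega))
  -- the sum ∑ a_i = 1 and part 1
  have hsum1 : ∑ i ∈ Finset.range N, aC x N i = 1 := by
    simp only [aC]
    rw [← Finset.sum_div, Finset.sum_range_sub (fun i => x i), div_self hden]
  have hS1 : (∑ i ∈ Finset.range N, aC x N i * α i) < 1 := by
    calc ∑ i ∈ Finset.range N, aC x N i * α i
        < ∑ i ∈ Finset.range N, aC x N i := by
          apply Finset.sum_lt_sum_of_nonempty hNne
          intro i hi
          have hi' := Finset.mem_range.mp hi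
          have hα1 : α i < 1 := (abs_lt.mp (hα i hi')).2
          exact mul_lt_of_lt_one_right (hapos i hi') hα1
      _ = 1 := hsum1
  -- the piece computation
  have hpiece : ∀ i, i < N →
      ∫ s in (x i)..(x (i + 1)), f s
        = aC x N i * (α i * (∫ t in (x 0)..(x N), f t)
            + ∫ t in (x 0)..(x N), q i t) := by
    intro i hi
    have ha := hapos i hi
    have h1 : ∫ t in (x 0)..(x N), f (aC x N i * t + bC x N i)
        = (aC x N i)⁻¹ • ∫ s in (x i)..(x (i + 1)), f s := by
      rw [intervalIntegral.integral_comp_mul_add f (ne_of_gt ha) (bC x N i),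
        hL0 i, hLN i]
    have h2 : ∫ t in (x 0)..(x N), f (aC x N i * t + bC x N i)
        = ∫ t in (x 0)..(x N), (α i * f t + q i t) := by
      apply intervalIntegral.integral_congr_ae
      have hne : ∀ᵐ t : ℝ, t ∉ ({x N} : Set ℝ) :=
        measure_eq_zero_iff_ae_notMem.mp (measure_singleton _)
      filter_upwards [hne] with t hne ht
      rw [uIoc_of_le h0N.le] at ht
      have htm : t ∈ Ico (x 0) (x N) := ⟨ht.1.le, lt_of_le_of_ne ht.2 (by simpa using hne)⟩
      exact hfe i hi t htm
    have h3 : ∫ t in (x 0)..(x N), (α i * f t + q i t)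
        = α i * (∫ t in (x 0)..(x N), f t) + ∫ t in (x 0)..(x N), q i t := by
      rw [intervalIntegral.integral_add (hfint.const_mul (α i)) (hqint i hi),
        intervalIntegral.integral_const_mul]
    have hkey := h1.symm.trans (h2.trans h3)
    rw [smul_eq_mul] at hkey
    have hP : ∫ s in (x i)..(x (i + 1)), f s
        = aC x N i * ((aC x N i)⁻¹ * ∫ s in (x i)..(x (i + 1)), f s) := by
      field_simp
    rw [hP, hkey]
  -- sum the pieces
  have hsum : ∫ t in (x 0)..(x N), f t
      = ∑ i ∈ Finset.range N, ∫ s in (x i)..(x (i + 1)), f s :=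
    (intervalIntegral.sum_integral_adjacent_intervals
      (fun k hk => hfint' k hk)).symm
  set I := ∫ t in (x 0)..(x N), f t with hIdef
  set S := ∑ i ∈ Finset.range N, aC x N i * α i with hSdef
  set B := ∑ i ∈ Finset.range N, aC x N i * ∫ t in (x 0)..(x N), q i t with hBdef
  have hI : I = S * I + B := by
    calc I = ∑ i ∈ Finset.range N, ∫ s in (x i)..(x (i + 1)), f s := hsum
      _ = ∑ i ∈ Finset.range N,
          (aC x N i * α i * I + aC x N i * ∫ t in (x 0)..(x N), q i t) := by
        apply Finset.sum_congr rfl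
        intro i hi
        rw [hpiece i (Finset.mem_range.mp hi)]
        ring
      _ = S * I + B := by
        rw [Finset.sum_add_distrib, hSdef, hBdef, Finset.sum_mul]
  refine ⟨hS1, ?_⟩
  have h1S : 1 - S ≠ 0 := by
    rw [hSdef] at hS1 ⊢
    intro h; rw [sub_eq_zero] at h; exact absurd h.symm (ne_of_lt hS1)
  rw [eq_div_iff h1S]
  linear_combination hI
end
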